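/- arXiv:2111.02841 — 10 statements merged into one kernel-verified Lean document; each statement's English description precedes it below -/
import Mathlib

section
/- For any POVM 𝒜 = {A_j} on a d-dimensional Hilbert space (each A_j a positive semidefinite operator, all nonzero, summing to the identity), the purity ℘(𝒜) := Σ_j tr(A_j²)/(d·tr A_j) satisfies 1/d ≤ ℘(𝒜) ≤ 1. The lower bound is attained iff every A_j is proportional to the identity, and the upper bound is attained iff every A_j has rank 1. -/
-- lower bound core
lemma core_low {n : ℕ} (hn : 0 < n) (f : Fin n → ℝ) :
    (∑ i, f i)^2 / n ≤ ∑ i, f i ^ 2 ∧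
    ((∑ i, f i)^2 / n = ∑ i, f i ^ 2 ↔ ∀ i, f i = (∑ i, f i) / n) := by
  have hn' : (n : ℝ) ≠ 0 := Nat.cast_ne_zero.mpr hn.ne'
  set t := ∑ i, f i with ht
  have key : ∑ i, (f i - t / n)^2 = ∑ i, f i ^ 2 - t^2 / n := by
    have : ∀ i, (f i - t / n)^2 = f i ^ 2 - 2 * (t/n) * f i + (t/n)^2 := by
      intro i; ring
    rw [Finset.sum_congr rfl fun i _ => this i]
    rw [Finset.sum_add_distrib, Finset.sum_sub_distrib, ← Finset.mul_sum, ← ht,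
      Finset.sum_const, Finset.card_univ, Fintype.card_fin, nsmul_eq_mul]
    field_simp
    ring
  have hnn : (0:ℝ) ≤ ∑ i, (f i - t / n)^2 := Finset.sum_nonneg fun i _ => sq_nonneg _
  constructor
  · linarith [key]
  · rw [eq_comm, ← sub_eq_zero, ← key]
    rw [Finset.sum_eq_zero_iff_of_nonneg fun i _ => sq_nonneg _]
    constructor
    · intro h i
      have := h i (Finset.mem_univ i)
      have := pow_eq_zero_iff (n := 2) (by norm_num) |>.mp this
      linarith [sub_eq_zero.mp this]
    · intro h i _
      rw [h i]; ring

-- upper bound core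
lemma core_up {n : ℕ} (f : Fin n → ℝ) (hf : ∀ i, 0 ≤ f i) (hpos : 0 < ∑ i, f i) :
    ∑ i, f i ^ 2 ≤ (∑ i, f i)^2 ∧
    (∑ i, f i ^ 2 = (∑ i, f i)^2 ↔ ∃! i, f i ≠ 0) := by
  set t := ∑ i, f i with ht
  have key : (∑ i, f i)^2 - ∑ i, f i ^ 2 = ∑ i, f i * (t - f i) := by
    rw [Finset.sum_congr rfl (fun i _ => by ring : ∀ i ∈ Finset.univ, f i * (t - f i) = f i * t - f i ^ 2)]
    rw [Finset.sum_sub_distrib, ← Finset.sum_mul, ← ht]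
    ring
  have hterm : ∀ i, 0 ≤ f i * (t - f i) := by
    intro i
    have hle : f i ≤ t := Finset.single_le_sum (fun j _ => hf j) (Finset.mem_univ i)
    exact mul_nonneg (hf i) (by linarith)
  have hnn : (0:ℝ) ≤ ∑ i, f i * (t - f i) := Finset.sum_nonneg fun i _ => hterm i
  constructor
  · linarith [key]
  · have hiff : ∑ i, f i ^ 2 = t^2 ↔ ∑ i, f i * (t - f i) = 0 := by
      constructor
      · intro h; linarith [key]
      · intro h; linarith [key]
    rw [hiff]
    rw [Finset.sum_eq_zero_iff_of_nonneg fun i _ => hterm i]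
    constructor
    · intro h
      -- each i: f i = 0 or f i = t
      have hcases : ∀ i, f i = 0 ∨ f i = t := by
        intro i
        rcases mul_eq_zero.mp (h i (Finset.mem_univ i)) with h0 | h0
        · exact Or.inl h0
        · exact Or.inr (by linarith [sub_eq_zero.mp h0])
      obtain ⟨i, hi⟩ : ∃ i, f i ≠ 0 := by
        by_contra hc
        push_neg at hc
        have : t = 0 := by rw [ht]; exact Finset.sum_eq_zero fun i _ => hc i
        linarith
      refine ⟨i, hi, fun j hj => ?_⟩
      by_contra hji
      have hfi : f i = t := (hcases i).resolve_left hi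
      have hfj : f j = t := (hcases j).resolve_left hj
      have hsub : ({j, i} : Finset (Fin n)).sum f ≤ t := by
        apply Finset.sum_le_sum_of_subset_of_nonneg (Finset.subset_univ _)
        intro k _ _; exact hf k
      rw [Finset.sum_pair hji] at hsub
      rw [hfi, hfj] at hsub
      linarith
    · intro ⟨i, hi, huniq⟩ j _
      rcases eq_or_ne j i with rfl | hji
      · have : t = f j := by
          rw [ht]
          exact (Finset.sum_eq_single j (fun k _ hk => by_contra fun hc => hk (huniq k hc)) (fun h => absurd (Finset.mem_univ j) h))
        rw [← this]; ring
      · have : f j = 0 := by_contra fun hc => hji (huniq j hc)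
        rw [this]; ring
open scoped ComplexOrder
open Matrix

lemma trace_eq_sum_eig (d : ℕ) (A : Matrix (Fin d) (Fin d) ℂ) (hA : A.IsHermitian) :
    A.trace = ∑ i, (hA.eigenvalues i : ℂ) := by
  conv_lhs => rw [hA.spectral_theorem, Unitary.conjStarAlgAut_apply]
  rw [trace_mul_cycle]
  rw [Unitary.coe_star_mul_self]
  simp [trace_diagonal]

lemma trace_sq_eq_sum_eig (d : ℕ) (A : Matrix (Fin d) (Fin d) ℂ) (hA : A.IsHermitian) :
    (A * A).trace = ∑ i, ((hA.eigenvalues i : ℂ))^2 := by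
  have h2 : A * A = (hA.eigenvectorUnitary : Matrix (Fin d) (Fin d) ℂ) *
      diagonal (fun i => ((hA.eigenvalues i : ℂ))^2) *
      star (hA.eigenvectorUnitary : Matrix (Fin d) (Fin d) ℂ) := by
    conv_lhs => rw [hA.spectral_theorem, Unitary.conjStarAlgAut_apply]
    rw [Matrix.mul_assoc, Matrix.mul_assoc, ← Matrix.mul_assoc _ (_ * _), ← Matrix.mul_assoc (star _)]
    rw [Unitary.coe_star_mul_self]
    simp [Matrix.diagonal_mul_diagonal, ← mul_assoc, Function.comp, sq]
  rw [h2, trace_mul_cycle, Unitary.coe_star_mul_self]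
  simp [trace_diagonal]

lemma eig_facts (d : ℕ) (hd : 1 ≤ d) (B : Matrix (Fin d) (Fin d) ℂ)
    (hB : B.PosSemidef) (hnz : B ≠ 0) :
    0 < B.trace.re ∧
    (B.trace.re)^2 / d ≤ (B * B).trace.re ∧
    (B * B).trace.re ≤ (B.trace.re)^2 ∧
    ((B * B).trace.re = (B.trace.re)^2 / d ↔ ∃ c : ℂ, B = c • (1 : Matrix (Fin d) (Fin d) ℂ)) ∧
    ((B * B).trace.re = (B.trace.re)^2 ↔ B.rank = 1) := by
  have hH := hB.1
  set f := hH.eigenvalues with hf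
  have hT : B.trace.re = ∑ i, f i := by
    rw [trace_eq_sum_eig d B hH, ← Complex.ofReal_sum]; simp
    rfl
  have hS : (B * B).trace.re = ∑ i, (f i)^2 := by
    rw [trace_sq_eq_sum_eig d B hH]
    simp [← Complex.ofReal_pow, ← Complex.ofReal_sum]
    rfl
  have hf0 : ∀ i, 0 ≤ f i := hB.eigenvalues_nonneg
  have hfne : f ≠ 0 := by
    intro h
    apply hnz
    have hsp := hH.spectral_theorem
    rw [hf] at h
    rwa [h, Pi.comp_zero, RCLike.ofReal_zero,
      (by rfl : Function.const (Fin d) (0 : ℂ) = fun _ => 0),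
      diagonal_zero, Unitary.conjStarAlgAut_apply, mul_zero, zero_mul] at hsp
  obtain ⟨i0, hi0⟩ := Function.ne_iff.mp hfne
  have hTpos : 0 < B.trace.re := by
    rw [hT]
    exact Finset.sum_pos' (fun i _ => hf0 i) ⟨i0, Finset.mem_univ i0, lt_of_le_of_ne (hf0 i0) (Ne.symm hi0)⟩
  have hsumpos : 0 < ∑ i, f i := by rwa [hT] at hTpos
  obtain ⟨hlow, hloweq⟩ := core_low (lt_of_lt_of_le one_pos hd) f
  obtain ⟨hup, hupeq⟩ := core_up f hf0 hsumpos
  refine ⟨hTpos, by rw [hT, hS]; exact hlow, by rw [hT, hS]; exact hup, ?_, ?_⟩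
  · -- identity-proportional case
    constructor
    · intro h
      have h' : (∑ i, f i)^2 / d = ∑ i, (f i)^2 := by
        rw [hT, hS] at h; linarith
      have hall := hloweq.mp h'
      refine ⟨((∑ i, f i) / d : ℝ), ?_⟩
      have hdiag : diagonal (RCLike.ofReal ∘ f) =
          (((∑ i, f i) / d : ℝ) : ℂ) • (1 : Matrix (Fin d) (Fin d) ℂ) := by
        ext i j
        rcases eq_or_ne i j with rfl | hij
        · simp [diagonal_apply_eq, Matrix.one_apply, hall i]
        · simp [diagonal_apply_ne _ hij, Matrix.one_apply_ne hij]
      have hsp := hH.spectral_theorem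
      rw [hdiag] at hsp
      rw [hsp, Unitary.conjStarAlgAut_apply, mul_smul_comm, mul_one, smul_mul_assoc]
      rw [show (hH.eigenvectorUnitary : Matrix (Fin d) (Fin d) ℂ) * star (hH.eigenvectorUnitary : Matrix (Fin d) (Fin d) ℂ) = 1 from (Matrix.mem_unitaryGroup_iff).mp hH.eigenvectorUnitary.2]
    · rintro ⟨c, hc⟩
      have hherm := hH
      rw [hc] at hherm
      have hcc : (starRingEnd ℂ) c = c := by
        have h2 := congr_fun (congr_fun hherm ⟨0, hd⟩) ⟨0, hd⟩
        simpa [Matrix.conjTranspose_apply, Matrix.one_apply] using h2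
      obtain ⟨r, hr⟩ : ∃ r : ℝ, c = (r : ℝ) :=
        ⟨c.re, (Complex.conj_eq_iff_re.mp hcc).symm⟩
      have hd0 : (d : ℝ) ≠ 0 := Nat.cast_ne_zero.mpr (by omega)
      have hTr : B.trace.re = r * d := by
        rw [hc, hr, Matrix.trace_smul, Matrix.trace_one, smul_eq_mul]
        have h2 : ((r:ℂ)*(Fintype.card (Fin d) :ℂ)) = ((r*d : ℝ) : ℂ) := by
          push_cast [Fintype.card_fin]; ring
        rw [h2, Complex.ofReal_re]
      have hSr : (B * B).trace.re = r^2 * d := by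
        rw [hc, hr]
        have h1 : ((r:ℂ) • (1 : Matrix (Fin d) (Fin d) ℂ)) * ((r:ℂ) • 1) = ((r:ℂ)*(r:ℂ)) • 1 := by
          rw [smul_mul_assoc, mul_smul_comm, one_mul, smul_smul]
        rw [h1, Matrix.trace_smul, Matrix.trace_one, smul_eq_mul]
        have h2 : ((r:ℂ)*(r:ℂ)*(Fintype.card (Fin d) :ℂ)) = ((r^2*d : ℝ) : ℂ) := by
          push_cast [Fintype.card_fin]; ring
        rw [h2, Complex.ofReal_re]
      rw [hTr, hSr]
      field_simp
  · rw [hT, hS, hupeq, hH.rank_eq_card_non_zero_eigs, Fintype.card_eq_one_iff]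
    constructor
    · rintro ⟨j, hj, hu⟩
      exact ⟨⟨j, hj⟩, fun ⟨k, hk⟩ => Subtype.ext (hu k hk)⟩
    · rintro ⟨⟨j, hj⟩, h⟩
      exact ⟨j, hj, fun k hk => Subtype.ext_iff.mp (h ⟨k, hk⟩)⟩

/-- purity bounds for a POVM. -/
theorem stmt_0 (d m : ℕ) (hd : 1 ≤ d) (A : Fin m → Matrix (Fin d) (Fin d) ℂ)
    (hpos : ∀ j, (A j).PosSemidef) (hnz : ∀ j, A j ≠ 0)
    (hsum : ∑ j, A j = 1) :
    (1 / (d : ℝ) ≤ ∑ j, (A j * A j).trace.re / (d * (A j).trace.re)) ∧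
    (∑ j, (A j * A j).trace.re / (d * (A j).trace.re) ≤ 1) ∧
    ((∑ j, (A j * A j).trace.re / (d * (A j).trace.re) = 1 / (d : ℝ)) ↔
      ∀ j, ∃ c : ℂ, A j = c • (1 : Matrix (Fin d) (Fin d) ℂ)) ∧
    ((∑ j, (A j * A j).trace.re / (d * (A j).trace.re) = 1) ↔
      ∀ j, (A j).rank = 1) := by
  have hd0 : (0:ℝ) < d := by exact_mod_cast Nat.lt_of_lt_of_le Nat.zero_lt_one hd
  have hdne : (d:ℝ) ≠ 0 := hd0.ne'
  set T : Fin m → ℝ := fun j => (A j).trace.re with hT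
  set S : Fin m → ℝ := fun j => ((A j) * (A j)).trace.re with hS
  have facts := fun j => eig_facts d hd (A j) (hpos j) (hnz j)
  have hTpos : ∀ j, 0 < T j := fun j => (facts j).1
  have hlowj : ∀ j, (T j)^2 / d ≤ S j := fun j => (facts j).2.1
  have hupj : ∀ j, S j ≤ (T j)^2 := fun j => (facts j).2.2.1
  have hideq : ∀ j, (S j = (T j)^2 / d ↔ ∃ c : ℂ, A j = c • 1) := fun j => (facts j).2.2.2.1
  have hrkeq : ∀ j, (S j = (T j)^2 ↔ (A j).rank = 1) := fun j => (facts j).2.2.2.2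
  have hsumT : ∑ j, T j = d := by
    have h1 : ∑ j, (A j).trace = (d:ℂ) := by
      rw [← Matrix.trace_sum, hsum, Matrix.trace_one]
      simp
    have h2 : (∑ j, (A j).trace).re = ∑ j, (A j).trace.re :=
      map_sum Complex.reAddGroupHom _ _
    rw [hT]
    simp only [← h2, h1, Complex.natCast_re]
  have hDj : ∀ j, (0:ℝ) < d * T j := fun j => mul_pos hd0 (hTpos j)
  have elow : ∀ j, T j / d^2 = ((T j)^2 / d) / (d * T j) := by
    intro j
    rw [eq_div_iff (hDj j).ne']
    field_simp
  have eup : ∀ j, T j / d = ((T j)^2) / (d * T j) := by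
    intro j
    rw [eq_div_iff (hDj j).ne']
    field_simp
  have hlow_term : ∀ j, T j / d^2 ≤ S j / (d * T j) := fun j => by
    rw [elow j]; exact (div_le_div_iff_of_pos_right (hDj j)).mpr (hlowj j)
  have hup_term : ∀ j, S j / (d * T j) ≤ T j / d := fun j => by
    rw [eup j]; exact (div_le_div_iff_of_pos_right (hDj j)).mpr (hupj j)
  have hsum_low : ∑ j, T j / d^2 = 1 / d := by
    rw [← Finset.sum_div, hsumT]
    rw [sq]
    rw [div_eq_div_iff (by positivity) hd0.ne']
    ring
  have hsum_up : ∑ j, T j / d = 1 := by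
    rw [← Finset.sum_div, hsumT, div_self hdne]
  refine ⟨?_, ?_, ?_, ?_⟩
  · show 1 / (d:ℝ) ≤ ∑ j, S j / (d * T j)
    rw [← hsum_low]
    exact Finset.sum_le_sum fun j _ => hlow_term j
  · show ∑ j, S j / (d * T j) ≤ 1
    rw [← hsum_up]
    exact Finset.sum_le_sum fun j _ => hup_term j
  · show (∑ j, S j / (d * T j) = 1 / (d:ℝ)) ↔ _
    rw [← hsum_low, eq_comm,
      Finset.sum_eq_sum_iff_of_le fun j _ => hlow_term j]
    constructor
    · intro h j
      have hj := h j (Finset.mem_univ j)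
      rw [elow j] at hj
      have : (T j)^2 / d = S j := (div_left_inj' (hDj j).ne').mp hj
      exact (hideq j).mp this.symm
    · intro h j _
      have := (hideq j).mpr (h j)
      rw [elow j, this]
  · show (∑ j, S j / (d * T j) = 1) ↔ _
    rw [← hsum_up,
      Finset.sum_eq_sum_iff_of_le fun j _ => hup_term j]
    constructor
    · intro h j
      have hj := h j (Finset.mem_univ j)
      rw [eup j] at hj
      have : S j = (T j)^2 := (div_left_inj' (hDj j).ne').mp hj
      exact (hrkeq j).mp this
    · intro h j _
      have hs := (hrkeq j).mpr (h j)
      rw [eup j, hs]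
end

section
/- Suppose 𝒜 = {A_j} is a coarse graining of 𝒝 = {B_k}, i.e., A_j = Σ_k Λ_{jk} B_k for a stochastic matrix Λ with Λ_{jk} ≥ 0 and Σ_j Λ_{jk} = 1 for all k. Then the purity satisfies ℘(𝒜) ≤ ℘(𝒝). -/
open scoped ComplexOrder

open Finset

lemma herm_entry {d : ℕ} {X : Matrix (Fin d) (Fin d) ℂ} (hX : X.IsHermitian) (i j : Fin d) :
    X j i = starRingEnd ℂ (X i j) := by
  rw [← hX.apply i j]; simp

lemma herm_trace_sq {d : ℕ} (X : Matrix (Fin d) (Fin d) ℂ) (hX : X.IsHermitian) :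
    (X * X).trace.re = ∑ i, ∑ j, Complex.normSq (X i j) := by
  have : (X * X).trace = ((∑ i, ∑ j, Complex.normSq (X i j) : ℝ) : ℂ) := by
    rw [Matrix.trace]
    simp only [Matrix.diag, Matrix.mul_apply]
    push_cast
    refine Finset.sum_congr rfl fun i _ => Finset.sum_congr rfl fun j _ => ?_
    rw [herm_entry hX i j, Complex.mul_conj]
  rw [this, Complex.ofReal_re]

lemma herm_trace_sq_nonneg {d : ℕ} (X : Matrix (Fin d) (Fin d) ℂ) (hX : X.IsHermitian) :
    0 ≤ (X * X).trace.re := by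
  rw [herm_trace_sq X hX]
  exact Finset.sum_nonneg fun i _ => Finset.sum_nonneg fun j _ => Complex.normSq_nonneg _

/-- Cauchy–Schwarz for traces of Hermitian matrices. -/
lemma trace_mul_le {d : ℕ} (X Y : Matrix (Fin d) (Fin d) ℂ)
    (hX : X.IsHermitian) (hY : Y.IsHermitian) :
    (X * Y).trace.re ≤ Real.sqrt ((X * X).trace.re) * Real.sqrt ((Y * Y).trace.re) := by
  have h1 : (X * Y).trace.re = ∑ i, ∑ j, (X i j * starRingEnd ℂ (Y i j)).re := by
    rw [Matrix.trace]
    simp only [Matrix.diag, Matrix.mul_apply, Complex.re_sum]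
    refine Finset.sum_congr rfl fun i _ => Finset.sum_congr rfl fun j _ => ?_
    rw [herm_entry hY i j]
  have hXs : ∑ p : Fin d × Fin d, ‖X p.1 p.2‖ ^ 2
      = ∑ i, ∑ j, Complex.normSq (X i j) := by
    rw [← Finset.univ_product_univ, Finset.sum_product]
    exact Finset.sum_congr rfl fun i _ => Finset.sum_congr rfl fun j _ => Complex.sq_norm _
  have hYs : ∑ p : Fin d × Fin d, ‖Y p.1 p.2‖ ^ 2
      = ∑ i, ∑ j, Complex.normSq (Y i j) := by
    rw [← Finset.univ_product_univ, Finset.sum_product]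
    exact Finset.sum_congr rfl fun i _ => Finset.sum_congr rfl fun j _ => Complex.sq_norm _
  rw [h1, herm_trace_sq X hX, herm_trace_sq Y hY]
  calc ∑ i, ∑ j, (X i j * starRingEnd ℂ (Y i j)).re
      ≤ ∑ i, ∑ j, ‖X i j‖ * ‖Y i j‖ := by
        refine Finset.sum_le_sum fun i _ => Finset.sum_le_sum fun j _ => ?_
        calc (X i j * starRingEnd ℂ (Y i j)).re
            ≤ ‖X i j * starRingEnd ℂ (Y i j)‖ := Complex.re_le_norm _
          _ = ‖X i j‖ * ‖Y i j‖ := by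
              rw [norm_mul, Complex.norm_conj]
    _ = ∑ p : Fin d × Fin d, ‖X p.1 p.2‖ * ‖Y p.1 p.2‖ := by
        rw [← Finset.univ_product_univ, Finset.sum_product]
    _ ≤ Real.sqrt (∑ p : Fin d × Fin d, ‖X p.1 p.2‖ ^ 2) *
          Real.sqrt (∑ p : Fin d × Fin d, ‖Y p.1 p.2‖ ^ 2) :=
        Real.sum_mul_le_sqrt_mul_sqrt _ _ _
    _ = Real.sqrt (∑ i, ∑ j, Complex.normSq (X i j)) *
          Real.sqrt (∑ i, ∑ j, Complex.normSq (Y i j)) := by rw [hXs, hYs]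

lemma psd_trace_pos {d : ℕ} (X : Matrix (Fin d) (Fin d) ℂ) (hX : X.PosSemidef) (hnz : X ≠ 0) :
    0 < X.trace.re := by
  have h0 : 0 ≤ X.trace := hX.trace_nonneg
  have hne : X.trace ≠ 0 := fun h => hnz (hX.trace_eq_zero_iff.1 h)
  exact (Complex.pos_iff.1 (lt_of_le_of_ne h0 (Ne.symm hne))).1

/-- purity is monotone under coarse graining. -/
theorem stmt_1 (d m n : ℕ) (hd : 1 ≤ d)
    (A : Fin m → Matrix (Fin d) (Fin d) ℂ) (B : Fin n → Matrix (Fin d) (Fin d) ℂ)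
    (Λ : Fin m → Fin n → ℝ)
    (hApos : ∀ j, (A j).PosSemidef) (hAnz : ∀ j, A j ≠ 0) (hAsum : ∑ j, A j = 1)
    (hBpos : ∀ k, (B k).PosSemidef) (hBnz : ∀ k, B k ≠ 0) (hBsum : ∑ k, B k = 1)
    (hΛnn : ∀ j k, 0 ≤ Λ j k) (hΛcol : ∀ k, ∑ j, Λ j k = 1)
    (hcg : ∀ j, A j = ∑ k, (Λ j k : ℂ) • B k) :
    ∑ j, (A j * A j).trace.re / (d * (A j).trace.re) ≤
      ∑ k, (B k * B k).trace.re / (d * (B k).trace.re) := by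
  have hd0 : 0 < d := hd
  have hdpos : (0:ℝ) < d := by exact_mod_cast hd0
  set t : Fin n → ℝ := fun k => (B k).trace.re with ht
  set x : Fin n → ℝ := fun k => Real.sqrt ((B k * B k).trace.re) with hx
  have htpos : ∀ k, 0 < t k := fun k => psd_trace_pos _ (hBpos k) (hBnz k)
  have hxnn : ∀ k, 0 ≤ x k := fun k => Real.sqrt_nonneg _
  have hxsq : ∀ k, x k ^ 2 = (B k * B k).trace.re := fun k =>
    Real.sq_sqrt (herm_trace_sq_nonneg _ (hBpos k).isHermitian)
  -- trace of A j
  have htA : ∀ j, (A j).trace.re = ∑ k, Λ j k * t k := by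
    intro j
    rw [hcg j, Matrix.trace_sum]
    simp [Matrix.trace_smul, Complex.re_sum, ht]
  -- bound on trace of (A j)^2
  have hAsq : ∀ j, (A j * A j).trace.re ≤ (∑ k, Λ j k * x k) ^ 2 := by
    intro j
    have hexp : A j * A j = ∑ k, ∑ l, ((Λ j k : ℂ) * (Λ j l : ℂ)) • (B k * B l) := by
      rw [hcg j, Finset.sum_mul_sum]
      refine Finset.sum_congr rfl fun k _ => Finset.sum_congr rfl fun l _ => ?_
      rw [Matrix.smul_mul, Matrix.mul_smul, smul_smul]
    have : (A j * A j).trace.re = ∑ k, ∑ l, Λ j k * Λ j l * (B k * B l).trace.re := by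
      rw [hexp, Matrix.trace_sum]
      rw [Complex.re_sum]
      refine Finset.sum_congr rfl fun k _ => ?_
      rw [Matrix.trace_sum, Complex.re_sum]
      refine Finset.sum_congr rfl fun l _ => ?_
      rw [Matrix.trace_smul, smul_eq_mul, ← Complex.ofReal_mul, Complex.re_ofReal_mul]
    rw [this, sq, Finset.sum_mul_sum]
    refine Finset.sum_le_sum fun k _ => Finset.sum_le_sum fun l _ => ?_
    have hcs := trace_mul_le (B k) (B l) (hBpos k).isHermitian (hBpos l).isHermitian
    calc Λ j k * Λ j l * (B k * B l).trace.re
        ≤ Λ j k * Λ j l * (x k * x l) := by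
          apply mul_le_mul_of_nonneg_left hcs (mul_nonneg (hΛnn j k) (hΛnn j l))
      _ = Λ j k * x k * (Λ j l * x l) := by ring
  -- per-j bound
  have hmain : ∀ j, (A j * A j).trace.re / (d * (A j).trace.re)
      ≤ ∑ k, Λ j k * (x k ^ 2 / (d * t k)) := by
    intro j
    have htAj : 0 < (A j).trace.re := psd_trace_pos _ (hApos j) (hAnz j)
    have hcs2 : (∑ k, Λ j k * x k) ^ 2 ≤
        (∑ k, Λ j k * t k) * (∑ k, Λ j k * x k ^ 2 / t k) := by
      have key := Finset.sum_mul_sq_le_sq_mul_sq Finset.univ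
        (fun k => Real.sqrt (Λ j k * t k)) (fun k => Real.sqrt (Λ j k / t k) * x k)
      have heq1 : ∀ k : Fin n, Real.sqrt (Λ j k * t k) * (Real.sqrt (Λ j k / t k) * x k)
          = Λ j k * x k := by
        intro k
        rw [← mul_assoc, ← Real.sqrt_mul (mul_nonneg (hΛnn j k) (htpos k).le)]
        have h2 : Λ j k * t k * (Λ j k / t k) = Λ j k ^ 2 := by
          field_simp [(htpos k).ne']
        rw [h2, Real.sqrt_sq (hΛnn j k)]
      have heq2 : ∀ k : Fin n, Real.sqrt (Λ j k * t k) ^ 2 = Λ j k * t k := fun k =>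
        Real.sq_sqrt (mul_nonneg (hΛnn j k) (htpos k).le)
      have heq3 : ∀ k : Fin n, (Real.sqrt (Λ j k / t k) * x k) ^ 2 = Λ j k * x k ^ 2 / t k := by
        intro k
        rw [mul_pow, Real.sq_sqrt (div_nonneg (hΛnn j k) (htpos k).le)]
        ring
      calc (∑ k, Λ j k * x k) ^ 2
          = (∑ k, Real.sqrt (Λ j k * t k) * (Real.sqrt (Λ j k / t k) * x k)) ^ 2 := by
            congr 1; exact (Finset.sum_congr rfl fun k _ => (heq1 k).symm)
        _ ≤ (∑ k, Real.sqrt (Λ j k * t k) ^ 2) * (∑ k, (Real.sqrt (Λ j k / t k) * x k) ^ 2) :=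
            key
        _ = (∑ k, Λ j k * t k) * (∑ k, Λ j k * x k ^ 2 / t k) := by
            congr 1
            · exact Finset.sum_congr rfl fun k _ => heq2 k
            · exact Finset.sum_congr rfl fun k _ => heq3 k
    have hsumpos : 0 < ∑ k, Λ j k * t k := (htA j) ▸ htAj
    have hsplit : (∑ k, Λ j k * (x k ^ 2 / (d * t k)))
        = (1 / d) * ∑ k, Λ j k * x k ^ 2 / t k := by
      rw [Finset.mul_sum]
      refine Finset.sum_congr rfl fun k _ => ?_
      field_simp [(htpos k).ne']
    rw [div_le_iff₀ (by positivity)]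
    calc (A j * A j).trace.re ≤ (∑ k, Λ j k * x k) ^ 2 := hAsq j
      _ ≤ (∑ k, Λ j k * t k) * (∑ k, Λ j k * x k ^ 2 / t k) := hcs2
      _ = (∑ k, Λ j k * (x k ^ 2 / (d * t k))) * (d * (A j).trace.re) := by
          rw [htA j, hsplit]
          field_simp
  calc ∑ j, (A j * A j).trace.re / (d * (A j).trace.re)
      ≤ ∑ j, ∑ k, Λ j k * (x k ^ 2 / (d * t k)) := Finset.sum_le_sum fun j _ => hmain j
    _ = ∑ k, (∑ j, Λ j k) * (x k ^ 2 / (d * t k)) := by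
        rw [Finset.sum_comm]
        exact Finset.sum_congr rfl fun k _ => (Finset.sum_mul _ _ _).symm
    _ = ∑ k, (B k * B k).trace.re / (d * (B k).trace.re) := by
        refine Finset.sum_congr rfl fun k _ => ?_
        rw [hΛcol k, one_mul, hxsq k]
end

section
/- Let 𝒮 = {(|ψ_j⟩, w_j)}_{j=1}^m be a 1-design in a d-dimensional Hilbert space (w_j > 0, Σ_j w_j = d, Σ_j w_j |ψ_j⟩⟨ψ_j| = 1). Then Φ_{1/2}(𝒮) = Σ_{j,k} w_j w_k |⟨ψ_j|ψ_k⟩| ≤ 1 + (d−1)√(d+1). -/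
open Matrix Finset

private lemma sum4_factor {d : ℕ} (f g h i : Fin d → ℂ) :
    ∑ x : (Fin d × Fin d) × Fin d × Fin d, f x.1.1 * g x.1.2 * h x.2.1 * i x.2.2
      = (∑ a, f a) * (∑ a, g a) * (∑ a, h a) * (∑ a, i a) := by
  simp only [Fintype.sum_prod_type]
  rw [show ∑ a, ∑ b, ∑ c, ∑ e, f a * g b * h c * i e
      = ∑ a, ∑ b, ∑ c, (f a * g b * h c) * (∑ e, i e) from
    sum_congr rfl fun a _ => sum_congr rfl fun b _ => sum_congr rfl fun c _ =>
      (Finset.mul_sum _ _ _).symm]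
  rw [show ∑ a, ∑ b, ∑ c, (f a * g b * h c) * (∑ e, i e)
      = ∑ a, ∑ b, (f a * g b * (∑ c, h c)) * (∑ e, i e) from
    sum_congr rfl fun a _ => sum_congr rfl fun b _ => by
      rw [← Finset.sum_mul, ← Finset.mul_sum]]
  rw [show ∑ a, ∑ b, (f a * g b * (∑ c, h c)) * (∑ e, i e)
      = ∑ a, (f a * (∑ b, g b) * (∑ c, h c)) * (∑ e, i e) from
    sum_congr rfl fun a _ => by
      rw [← Finset.sum_mul, ← Finset.sum_mul, ← Finset.mul_sum]]
  rw [← Finset.sum_mul, ← Finset.sum_mul, ← Finset.sum_mul]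

private lemma poly_bound (t y : ℝ) (ht : 1 ≤ t) (hy0 : 0 ≤ y) (hy1 : y ≤ 1) :
    2*(t+1)^2 * y ≤ (t+2) + t*(t^2+2*t+3)*y^2 - t^3*y^4 := by
  have h : 0 ≤ (t*y-1)^2 * ((1-y)*(t*y+t+2)) := by
    have h1 : (0:ℝ) ≤ 1 - y := by linarith
    have h2 : (0:ℝ) ≤ t*y+t+2 := by nlinarith
    positivity
  nlinarith [h]

set_option maxHeartbeats 1000000 in
/-- upper bound `Φ_{1/2}(𝒮) ≤ 1 + (d-1)√(d+1)` for a 1-design. -/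
theorem stmt_5 (d m : ℕ) (hd : 1 ≤ d) (v : Fin m → Fin d → ℂ) (w : Fin m → ℝ)
    (hw : ∀ j, 0 < w j) (hwsum : ∑ j, w j = d)
    (hunit : ∀ j, star (v j) ⬝ᵥ v j = 1)
    (hdesign : ∑ j, (w j : ℂ) • Matrix.vecMulVec (v j) (star (v j)) = 1) :
    ∑ j, ∑ k, w j * w k * ‖star (v j) ⬝ᵥ v k‖ ≤
      1 + ((d : ℝ) - 1) * Real.sqrt ((d : ℝ) + 1) := by
  have hu : ∀ j, ∑ a, v j a * (starRingEnd ℂ) (v j a) = 1 := by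
    intro j
    have h := hunit j
    rw [dotProduct] at h
    rw [← h]
    exact sum_congr rfl fun a _ => by simp [mul_comm]
  have hconj : ∀ j k, star (v k) ⬝ᵥ v j = (starRingEnd ℂ) (star (v j) ⬝ᵥ v k) := by
    intro j k
    simp only [dotProduct, map_sum, _root_.map_mul, Pi.star_apply, RCLike.star_def,
      Complex.conj_conj]
    exact sum_congr rfl fun a _ => by ring
  have E : ∀ a c, ∑ j, (w j:ℂ) * (v j a * (starRingEnd ℂ) (v j c)) = if a = c then 1 else 0 := by
    intro a c
    have h := congrFun (congrFun hdesign a) c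
    simpa [Matrix.sum_apply, Matrix.vecMulVec, Matrix.one_apply, smul_eq_mul, mul_assoc] using h
  -- second moment identity (complex form)
  have F1C : ∑ k, ∑ j, ((w k:ℂ) * w j) * ((star (v j) ⬝ᵥ v k) * (star (v k) ⬝ᵥ v j)) = (d:ℂ) := by
    have inner : ∀ k, ∑ j, (w j:ℂ) * ((star (v j) ⬝ᵥ v k) * (star (v k) ⬝ᵥ v j)) = 1 := by
      intro k
      calc ∑ j, (w j:ℂ) * ((star (v j) ⬝ᵥ v k) * (star (v k) ⬝ᵥ v j))
          = ∑ j, ∑ a, ∑ c, (v k a * (starRingEnd ℂ) (v k c)) * ((w j:ℂ) * (v j c * (starRingEnd ℂ) (v j a))) := by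
            refine sum_congr rfl fun j _ => ?_
            rw [dotProduct, dotProduct, Finset.sum_mul_sum, Finset.mul_sum]
            refine sum_congr rfl fun a _ => ?_
            rw [Finset.mul_sum]
            refine sum_congr rfl fun c _ => ?_
            simp only [Pi.star_apply, RCLike.star_def]
            ring
        _ = ∑ a, ∑ c, (v k a * (starRingEnd ℂ) (v k c)) * (∑ j, (w j:ℂ) * (v j c * (starRingEnd ℂ) (v j a))) := by
            rw [Finset.sum_comm]
            refine sum_congr rfl fun a _ => ?_
            rw [Finset.sum_comm]
            exact sum_congr rfl fun c _ => (Finset.mul_sum _ _ _).symm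
        _ = ∑ a, v k a * (starRingEnd ℂ) (v k a) := by
            simp_rw [E]
            simp
        _ = 1 := hu k
    calc ∑ k, ∑ j, ((w k:ℂ) * w j) * ((star (v j) ⬝ᵥ v k) * (star (v k) ⬝ᵥ v j))
        = ∑ k, (w k:ℂ) * ∑ j, (w j:ℂ) * ((star (v j) ⬝ᵥ v k) * (star (v k) ⬝ᵥ v j)) := by
          refine sum_congr rfl fun k _ => ?_
          rw [Finset.mul_sum]
          exact sum_congr rfl fun j _ => by ring
      _ = ∑ k, (w k:ℂ) := by simp [inner]
      _ = (d:ℂ) := by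
          rw [show (∑ k, ((w k:ℝ):ℂ)) = ((∑ k, w k :ℝ):ℂ) from (Complex.ofReal_sum _ _).symm, hwsum]
          norm_num
  -- real second moment
  have S2 : ∑ j, ∑ k, w j * w k * (‖star (v j) ⬝ᵥ v k‖)^2 = (d:ℝ) := by
    have hz : ∀ j k, (star (v j) ⬝ᵥ v k) * (star (v k) ⬝ᵥ v j)
        = (((‖star (v j) ⬝ᵥ v k‖)^2 : ℝ) : ℂ) := by
      intro j k
      rw [hconj j k, Complex.mul_conj]
      norm_cast
      exact (Complex.sq_norm _).symm
    simp_rw [hz] at F1C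
    push_cast at F1C
    apply Complex.ofReal_injective
    push_cast
    rw [← F1C, Finset.sum_comm]
    exact sum_congr rfl fun j _ => sum_congr rfl fun k _ => by ring
  -- Cauchy-Schwarz bound on overlaps
  have F3 : ∀ j k, ‖star (v j) ⬝ᵥ v k‖ ≤ 1 := by
    intro j k
    have hnorm : ∀ i, ∑ a, (‖v i a‖)^2 = 1 := by
      intro i
      have h := hu i
      have : ((∑ a, (‖v i a‖)^2 : ℝ) : ℂ) = 1 := by
        rw [Complex.ofReal_sum, ← h]
        refine sum_congr rfl fun a _ => ?_
        rw [show ((((‖v i a‖)^2 :ℝ)):ℂ) = ((Complex.normSq (v i a) : ℝ):ℂ) by rw [Complex.sq_norm], ← Complex.mul_conj]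
      exact_mod_cast this
    have step1 : ‖star (v j) ⬝ᵥ v k‖ ≤ ∑ a, ‖v j a‖ * ‖v k a‖ := by
      rw [dotProduct]
      refine le_trans (norm_sum_le _ _) (le_of_eq (sum_congr rfl fun a _ => ?_))
      simp [_root_.map_mul]
    have step2 : (∑ a, ‖v j a‖ * ‖v k a‖)^2 ≤ 1 := by
      have := Finset.sum_mul_sq_le_sq_mul_sq Finset.univ (fun a => ‖v j a‖) (fun a => ‖v k a‖)
      rw [hnorm j, hnorm k] at this
      simpa using this
    have hs : 0 ≤ ∑ a, ‖v j a‖ * ‖v k a‖ := by positivity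
    nlinarith [step1, step2, hs]
  -- fourth moment lower bound (2-design frame potential)
  have F2 : 4*(d:ℝ)^2 ≤ (∑ j, ∑ k, w j * w k * (‖star (v j) ⬝ᵥ v k‖)^4) * (2*(d:ℝ)^2 + 2*d) := by
    set T : (Fin d × Fin d) × Fin d × Fin d → ℂ := fun x =>
      ∑ j, (w j:ℂ) * (v j x.1.1 * v j x.1.2 * (starRingEnd ℂ) (v j x.2.1) * (starRingEnd ℂ) (v j x.2.2)) with hT
    set g : (Fin d × Fin d) × Fin d × Fin d → ℝ := fun x =>
      (if x.1.1 = x.2.1 then (1:ℝ) else 0) * (if x.1.2 = x.2.2 then 1 else 0)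
        + (if x.1.1 = x.2.2 then 1 else 0) * (if x.1.2 = x.2.1 then 1 else 0) with hg
    -- ∑ g² = 2d² + 2d
    have hgg : ∑ x, (g x)^2 = 2*(d:ℝ)^2 + 2*d := by
      rw [hg]
      simp only [Fintype.sum_prod_type, sq, mul_add, add_mul, mul_ite, ite_mul, mul_one, mul_zero,
        zero_mul, one_mul, Finset.sum_add_distrib]
      simp only [Finset.sum_ite_eq, Finset.sum_ite_eq', Finset.mem_univ, if_true,
        Finset.sum_ite_irrel, Finset.sum_const_zero, Finset.sum_const, Finset.card_univ,
        Fintype.card_fin, nsmul_eq_mul, mul_one, zero_add, add_zero, mul_zero]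
      simp [Finset.sum_add_distrib, Finset.sum_ite_eq]
      ring
    -- ∑ T·g = 2d (complex)
    have htgC : ∑ x, T x * ((g x : ℝ):ℂ) = 2*(d:ℂ) := by
      simp only [hT, hg]
      push_cast [apply_ite (Complex.ofReal)]
      simp_rw [Finset.sum_mul]
      rw [Finset.sum_comm]
      have h1 : ∀ j, ∑ a, ∑ b, (w j:ℂ) * (v j a * v j b * (starRingEnd ℂ) (v j a) * (starRingEnd ℂ) (v j b)) = (w j:ℂ) := by
        intro j
        have inner1 : ∀ a, ∑ b, (w j:ℂ) * (v j a * v j b * (starRingEnd ℂ) (v j a) * (starRingEnd ℂ) (v j b))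
            = ((w j:ℂ) * (v j a * (starRingEnd ℂ) (v j a))) := by
          intro a
          calc ∑ b, (w j:ℂ) * (v j a * v j b * (starRingEnd ℂ) (v j a) * (starRingEnd ℂ) (v j b))
              = ((w j:ℂ) * (v j a * (starRingEnd ℂ) (v j a))) * ∑ b, v j b * (starRingEnd ℂ) (v j b) := by
                rw [Finset.mul_sum]; exact sum_congr rfl fun b _ => by ring
            _ = _ := by rw [hu j, mul_one]
        simp_rw [inner1]
        rw [← Finset.mul_sum, hu j, mul_one]
      have inner : ∀ j, ∑ x : (Fin d × Fin d) × Fin d × Fin d,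
          ((w j:ℂ) * (v j x.1.1 * v j x.1.2 * (starRingEnd ℂ) (v j x.2.1) * (starRingEnd ℂ) (v j x.2.2)))
          * (((if x.1.1 = x.2.1 then (1:ℂ) else 0) * (if x.1.2 = x.2.2 then 1 else 0)
            + (if x.1.1 = x.2.2 then 1 else 0) * (if x.1.2 = x.2.1 then 1 else 0))) = 2 * w j := by
        intro j
        simp only [Fintype.sum_prod_type, mul_add, mul_ite, ite_mul, mul_one, mul_zero, zero_mul,
          one_mul, Finset.sum_add_distrib, Finset.sum_ite_eq, Finset.sum_ite_eq', Finset.mem_univ,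
          if_true, Finset.sum_ite_irrel, Finset.sum_const_zero, zero_add, add_zero]
        rw [show ∑ a, ∑ b, (w j:ℂ) * (v j a * v j b * (starRingEnd ℂ) (v j b) * (starRingEnd ℂ) (v j a))
            = ∑ a, ∑ b, (w j:ℂ) * (v j a * v j b * (starRingEnd ℂ) (v j a) * (starRingEnd ℂ) (v j b)) from
          sum_congr rfl fun a _ => sum_congr rfl fun b _ => by ring]
        rw [h1 j]; ring
      simp_rw [inner]
      rw [← Finset.mul_sum]
      rw [show (∑ i, ((w i:ℝ):ℂ)) = ((∑ i, w i :ℝ):ℂ) from (Complex.ofReal_sum _ _).symm, hwsum]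
      push_cast
      ring
    -- ∑ (T x).re * g x = 2d (real)
    have htg : ∑ x, (T x).re * g x = 2*(d:ℝ) := by
      have h1 : ∀ x, (T x).re * g x = (T x * ((g x:ℝ):ℂ)).re := by
        intro x
        simp [Complex.mul_re]
      simp_rw [h1]
      rw [← Complex.re_sum, htgC]
      simp
    -- ∑ normSq T = fourth moment
    have hTT : ∑ x, Complex.normSq (T x) = ∑ j, ∑ k, w j * w k * (‖star (v j) ⬝ᵥ v k‖)^4 := by
      apply Complex.ofReal_injective
      rw [Complex.ofReal_sum]
      have hmc : ∀ x, ((Complex.normSq (T x) : ℝ):ℂ) = T x * (starRingEnd ℂ) (T x) := fun x => (Complex.mul_conj _).symm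
      simp_rw [hmc]
      have hconjT : ∀ x : (Fin d × Fin d) × Fin d × Fin d, (starRingEnd ℂ) (T x)
          = ∑ k, (w k:ℂ) * ((starRingEnd ℂ) (v k x.1.1) * (starRingEnd ℂ) (v k x.1.2) * v k x.2.1 * v k x.2.2) := by
        intro x
        rw [hT]
        simp only [map_sum, _root_.map_mul, Complex.conj_ofReal, Complex.conj_conj]
      have expand : ∀ x : (Fin d × Fin d) × Fin d × Fin d, T x * (starRingEnd ℂ) (T x)
          = ∑ j, ∑ k, ((w j:ℂ) * w k) *
              ((v j x.1.1 * (starRingEnd ℂ) (v k x.1.1)) * (v j x.1.2 * (starRingEnd ℂ) (v k x.1.2))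
                * ((starRingEnd ℂ) (v j x.2.1) * v k x.2.1) * ((starRingEnd ℂ) (v j x.2.2) * v k x.2.2)) := by
        intro x
        rw [hconjT x, hT]
        rw [Finset.sum_mul_sum]
        refine sum_congr rfl fun j _ => sum_congr rfl fun k _ => by ring
      simp_rw [expand]
      rw [Finset.sum_comm]
      rw [Complex.ofReal_sum]
      refine sum_congr rfl fun j _ => ?_
      rw [Finset.sum_comm]
      rw [Complex.ofReal_sum]
      refine sum_congr rfl fun k _ => ?_
      have hfac := sum4_factor (fun a => v j a * (starRingEnd ℂ) (v k a)) (fun a => v j a * (starRingEnd ℂ) (v k a))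
        (fun a => (starRingEnd ℂ) (v j a) * v k a) (fun a => (starRingEnd ℂ) (v j a) * v k a)
      rw [← Finset.mul_sum]
      rw [show (∑ x : (Fin d × Fin d) × Fin d × Fin d,
          ((v j x.1.1 * (starRingEnd ℂ) (v k x.1.1)) * (v j x.1.2 * (starRingEnd ℂ) (v k x.1.2))
            * ((starRingEnd ℂ) (v j x.2.1) * v k x.2.1) * ((starRingEnd ℂ) (v j x.2.2) * v k x.2.2)))
          = (∑ a, v j a * (starRingEnd ℂ) (v k a)) * (∑ a, v j a * (starRingEnd ℂ) (v k a))
            * (∑ a, (starRingEnd ℂ) (v j a) * v k a) * (∑ a, (starRingEnd ℂ) (v j a) * v k a) from hfac]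
      have hz1 : (∑ a, (starRingEnd ℂ) (v j a) * v k a) = star (v j) ⬝ᵥ v k := by
        rw [dotProduct]; exact sum_congr rfl fun a _ => by simp
      have hz2 : (∑ a, v j a * (starRingEnd ℂ) (v k a)) = (starRingEnd ℂ) (star (v j) ⬝ᵥ v k) := by
        rw [dotProduct, map_sum]
        exact sum_congr rfl fun a _ => by
          simp only [Pi.star_apply, RCLike.star_def, _root_.map_mul, Complex.conj_conj]
          try ring
      rw [hz1, hz2]
      rw [show (starRingEnd ℂ) (star (v j) ⬝ᵥ v k) * (starRingEnd ℂ) (star (v j) ⬝ᵥ v k)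
            * (star (v j) ⬝ᵥ v k) * (star (v j) ⬝ᵥ v k)
          = ((star (v j) ⬝ᵥ v k) * (starRingEnd ℂ) (star (v j) ⬝ᵥ v k))^2 by ring]
      rw [Complex.mul_conj]
      push_cast [Complex.normSq_eq_norm_sq]
      ring
    -- Cauchy-Schwarz
    have hcs := Finset.sum_mul_sq_le_sq_mul_sq Finset.univ (fun x => (T x).re) g
    rw [htg, hgg] at hcs
    have hrebound : ∑ x, ((T x).re)^2 ≤ ∑ x, Complex.normSq (T x) :=
      Finset.sum_le_sum fun x _ => by
        rw [Complex.normSq_apply]; nlinarith [sq_nonneg ((T x).im)]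
    rw [hTT] at hrebound
    have hgg0 : (0:ℝ) ≤ 2*(d:ℝ)^2 + 2*d := by positivity
    calc 4*(d:ℝ)^2 = (2*(d:ℝ))^2 := by ring
      _ ≤ (∑ x, ((T x).re)^2) * (2*(d:ℝ)^2 + 2*(d:ℝ)) := by
          convert hcs using 2
      _ ≤ (∑ j, ∑ k, w j * w k * (‖star (v j) ⬝ᵥ v k‖)^4) * (2*(d:ℝ)^2 + 2*d) := by
          apply mul_le_mul_of_nonneg_right hrebound hgg0
  -- final assembly
  set t := Real.sqrt ((d:ℝ)+1) with htdef
  have hd1 : (1:ℝ) ≤ (d:ℝ) := by exact_mod_cast hd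
  have ht2 : t^2 = (d:ℝ)+1 := Real.sq_sqrt (by positivity)
  have ht0 : 0 ≤ t := Real.sqrt_nonneg _
  have ht1 : 1 ≤ t := by nlinarith
  set Q := ∑ j, ∑ k, w j * w k * (‖star (v j) ⬝ᵥ v k‖)^4 with hQdef
  have hS0 : ∑ j, ∑ k, w j * w k = (d:ℝ)^2 := by
    rw [← Fintype.sum_mul_sum, hwsum]; ring
  have main : 2*(t+1)^2 * (∑ j, ∑ k, w j * w k * ‖star (v j) ⬝ᵥ v k‖)
      ≤ (t+2)*(d:ℝ)^2 + t*(t^2+2*t+3)*(d:ℝ) - t^3*Q := by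
    have pointwise : ∀ j k, 2*(t+1)^2 * (w j * w k * ‖star (v j) ⬝ᵥ v k‖)
        ≤ (t+2)*(w j * w k) + t*(t^2+2*t+3)*(w j * w k * (‖star (v j) ⬝ᵥ v k‖)^2)
          - t^3*(w j * w k * (‖star (v j) ⬝ᵥ v k‖)^4) := by
      intro j k
      have hww : 0 ≤ w j * w k := le_of_lt (mul_pos (hw j) (hw k))
      have hpb := poly_bound t (‖star (v j) ⬝ᵥ v k‖) ht1 (norm_nonneg _) (F3 j k)
      nlinarith [mul_le_mul_of_nonneg_left hpb hww]
    calc 2*(t+1)^2 * (∑ j, ∑ k, w j * w k * ‖star (v j) ⬝ᵥ v k‖)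
        = ∑ j, ∑ k, 2*(t+1)^2 * (w j * w k * ‖star (v j) ⬝ᵥ v k‖) := by
          rw [Finset.mul_sum]
          exact sum_congr rfl fun j _ => Finset.mul_sum _ _ _
      _ ≤ ∑ j, ∑ k, ((t+2)*(w j * w k) + t*(t^2+2*t+3)*(w j * w k * (‖star (v j) ⬝ᵥ v k‖)^2)
            - t^3*(w j * w k * (‖star (v j) ⬝ᵥ v k‖)^4)) :=
          Finset.sum_le_sum fun j _ => Finset.sum_le_sum fun k _ => pointwise j k
      _ = (t+2)*(d:ℝ)^2 + t*(t^2+2*t+3)*(d:ℝ) - t^3*Q := by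
          rw [← hS0, ← S2, hQdef]
          simp_rw [Finset.sum_sub_distrib, Finset.sum_add_distrib, ← Finset.mul_sum]
  have hQ2 : 2*(d:ℝ)*t ≤ t^3 * Q := by
    have hdpos : (0:ℝ) < (d:ℝ) + 1 := by linarith
    have h1 : 2*(d:ℝ)/((d:ℝ)+1) ≤ Q := by
      rw [div_le_iff₀ hdpos]
      nlinarith [F2]
    calc 2*(d:ℝ)*t = t^3 * (2*(d:ℝ)/((d:ℝ)+1)) := by
          rw [show t^3 = t*t^2 by ring, ht2]
          field_simp
      _ ≤ t^3 * Q := mul_le_mul_of_nonneg_left h1 (by positivity)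
  have hdt : (d:ℝ) = t^2 - 1 := by linarith
  have ident : (t+2)*(d:ℝ)^2 + t*(t^2+2*t+3)*(d:ℝ) - 2*(d:ℝ)*t = 2*(t+1)^2*(1+((d:ℝ)-1)*t) := by
    rw [hdt]; ring
  have h2 : 2*(t+1)^2 * (∑ j, ∑ k, w j * w k * ‖star (v j) ⬝ᵥ v k‖)
      ≤ 2*(t+1)^2*(1+((d:ℝ)-1)*t) := by linarith
  have hpos : (0:ℝ) < 2*(t+1)^2 := by positivity
  nlinarith [h2]
end

section
/- Let 𝒮 = {(|ψ_j⟩, w_j)}_{j=1}^m be a 1-design in a d-dimensional Hilbert space with m states (w_j ≥ 0, Σ_j w_j = d, Σ_j w_j |ψ_j⟩⟨ψ_j| = 1, and all |ψ_j⟩ unit vectors). Then Φ_{1/2}(𝒮) = Σ_{j,k} w_j w_k |⟨ψ_j|ψ_k⟩| ≤ d²/m + (d/m)·√(d(m−1)(m−d)). -/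
open Matrix Finset

private theorem design_id' (d m : ℕ) (v : Fin m → Fin d → ℂ) (w : Fin m → ℝ)
    (hunit : ∀ j, star (v j) ⬝ᵥ v j = 1)
    (hdesign : ∑ j, (w j : ℂ) • Matrix.vecMulVec (v j) (star (v j)) = 1) (j : Fin m) :
    ∑ k, (w k : ℂ) * ((star (v j) ⬝ᵥ v k) * (star (v k) ⬝ᵥ v j)) = 1 := by
  have h := congrArg (fun M : Matrix (Fin d) (Fin d) ℂ => star (v j) ⬝ᵥ (M *ᵥ v j)) hdesign
  simp only [Matrix.mulVec, dotProduct, Matrix.sum_apply, Pi.smul_apply,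
    Matrix.smul_apply, Matrix.vecMulVec_apply, Matrix.one_apply, smul_eq_mul, Pi.star_apply,
    ite_mul, one_mul, zero_mul, Finset.sum_ite_eq, Finset.mem_univ, if_true] at h
  have h1 : (∑ i, star (v j i) * v j i) = 1 := hunit j
  rw [h1] at h
  rw [← h]
  simp only [dotProduct, Pi.star_apply, Finset.mul_sum, Finset.sum_mul]
  rw [Finset.sum_comm]
  conv_rhs => rw [Finset.sum_comm]
  apply Finset.sum_congr rfl; intro y _
  rw [Finset.sum_comm]
  apply Finset.sum_congr rfl; intro i _
  apply Finset.sum_congr rfl; intro k _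
  ring

/-- real form of the design identity -/
private theorem design_id_real (d m : ℕ) (v : Fin m → Fin d → ℂ) (w : Fin m → ℝ)
    (hunit : ∀ j, star (v j) ⬝ᵥ v j = 1)
    (hdesign : ∑ j, (w j : ℂ) • Matrix.vecMulVec (v j) (star (v j)) = 1) (j : Fin m) :
    ∑ k, w k * ‖star (v j) ⬝ᵥ v k‖^2 = 1 := by
  have h := design_id' d m v w hunit hdesign j
  have hcc : ∀ k, (star (v k) ⬝ᵥ v j) = starRingEnd ℂ (star (v j) ⬝ᵥ v k) := by
    intro k
    rw [Matrix.star_dotProduct]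
    rfl
  have : ((∑ k, w k * ‖star (v j) ⬝ᵥ v k‖^2 : ℝ) : ℂ) = 1 := by
    push_cast
    rw [← h]
    apply Finset.sum_congr rfl; intro k _
    rw [hcc k, Complex.mul_conj, ← Complex.sq_norm]
    norm_cast
  exact_mod_cast this

private theorem sqrt_mono_step (a b t : ℝ) (ha : 0 ≤ a) (hb : 0 ≤ b) (ht : 0 ≤ t) :
    t + Real.sqrt (a * b) ≤ Real.sqrt ((a + t) * (b + t)) := by
  have h1 : 0 ≤ t + Real.sqrt (a * b) := by positivity
  rw [show t + Real.sqrt (a * b) = Real.sqrt ((t + Real.sqrt (a * b))^2) from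
    (Real.sqrt_sq h1).symm]
  apply Real.sqrt_le_sqrt
  have hs : Real.sqrt (a * b) = Real.sqrt a * Real.sqrt b := Real.sqrt_mul ha b
  have h2 : 2 * Real.sqrt a * Real.sqrt b ≤ a + b := by
    have := two_mul_le_add_sq (Real.sqrt a) (Real.sqrt b)
    rwa [Real.sq_sqrt ha, Real.sq_sqrt hb] at this
  have h3 : (Real.sqrt (a * b))^2 = a * b := Real.sq_sqrt (by positivity)
  nlinarith [h2, h3, hs]

/-- upper bound for `Φ_{1/2}` of a 1-design with m states. -/
theorem stmt_6 (d m : ℕ) (hdm : d ≤ m) (v : Fin m → Fin d → ℂ) (w : Fin m → ℝ)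
    (hw : ∀ j, 0 ≤ w j) (hwsum : ∑ j, w j = d)
    (hunit : ∀ j, star (v j) ⬝ᵥ v j = 1)
    (hdesign : ∑ j, (w j : ℂ) • Matrix.vecMulVec (v j) (star (v j)) = 1) :
    ∑ j, ∑ k, w j * w k * ‖star (v j) ⬝ᵥ v k‖ ≤
      (d : ℝ) ^ 2 / m +
        ((d : ℝ) / m) * Real.sqrt ((d : ℝ) * ((m : ℝ) - 1) * ((m : ℝ) - (d : ℝ))) := by
  rcases Nat.eq_zero_or_pos m with hm | hm
  · subst hm
    have hd : d = 0 := Nat.le_zero.mp hdm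
    subst hd
    simp
  have hm' : (0 : ℝ) < m := by exact_mod_cast hm
  have hc : ∀ j k : Fin m, ‖star (v j) ⬝ᵥ v k‖ = ‖star (v j) ⬝ᵥ v k‖ :=
    fun _ _ => rfl
  let c : Fin m → Fin m → ℝ := fun j k => ‖star (v j) ⬝ᵥ v k‖
  -- diagonal entries are 1
  have hcd : ∀ j, c j j = 1 := by intro j; simp [c, hunit j]
  have hW : ∀ p : Fin m × Fin m, 0 ≤ w p.1 * w p.2 := fun p => mul_nonneg (hw _) (hw _)
  have hcnn : ∀ j k, 0 ≤ c j k := fun j k => norm_nonneg _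
  set h := ∑ j, w j ^ 2 with hh
  -- split diag/offdiag for any G
  have split : ∀ G : Fin m × Fin m → ℝ,
      ∑ j, ∑ k, G (j, k) = (∑ j, G (j, j)) + ∑ p ∈ Finset.univ.offDiag, G p := by
    intro G
    rw [← Finset.sum_product', ← Finset.diag_union_offDiag,
      Finset.sum_union (Finset.disjoint_diag_offDiag _), Finset.sum_diag]
  -- total weight square
  have htot : ∑ j, ∑ k, w j * w k = (d : ℝ)^2 := by
    rw [← Finset.sum_mul_sum]
    rw [hwsum]; ring
  -- design identity total
  have hBtot : ∑ j, ∑ k, w j * w k * (c j k)^2 = (d : ℝ) := by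
    have key : ∀ j, ∑ k, w j * w k * (c j k)^2 = w j := by
      intro j
      have := design_id_real d m v w hunit hdesign j
      calc ∑ k, w j * w k * (c j k)^2 = w j * ∑ k, w k * (c j k)^2 := by
            rw [Finset.mul_sum]; apply Finset.sum_congr rfl; intro k _; ring
        _ = w j := by rw [this]; ring
    calc ∑ j, ∑ k, w j * w k * (c j k)^2 = ∑ j, w j := Finset.sum_congr rfl fun j _ => key j
      _ = d := hwsum
  -- off-diagonal quantities
  set A := ∑ p ∈ Finset.univ.offDiag, w p.1 * w p.2 with hA
  set B := ∑ p ∈ Finset.univ.offDiag, w p.1 * w p.2 * (c p.1 p.2)^2 with hB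
  have hA0 : 0 ≤ A := Finset.sum_nonneg fun p _ => hW p
  have hB0 : 0 ≤ B := Finset.sum_nonneg fun p _ => mul_nonneg (hW p) (sq_nonneg _)
  have hAeq : h + A = (d : ℝ)^2 := by
    have hs := split (fun p => w p.1 * w p.2)
    simp only at hs
    rw [← htot, hs, hh]
    congr 1
    apply Finset.sum_congr rfl; intro j _; ring
  have hBeq : h + B = (d : ℝ) := by
    have hs := split (fun p => w p.1 * w p.2 * (c p.1 p.2)^2)
    simp only at hs
    rw [← hBtot, hs, hh]
    congr 1
    apply Finset.sum_congr rfl; intro j _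
    rw [hcd]; ring
  -- Cauchy-Schwarz on the off-diagonal
  have cs : ∑ p ∈ Finset.univ.offDiag, w p.1 * w p.2 * c p.1 p.2 ≤
      Real.sqrt A * Real.sqrt B := by
    have h1 := Real.sum_mul_le_sqrt_mul_sqrt Finset.univ.offDiag
      (fun p => Real.sqrt (w p.1 * w p.2)) (fun p => Real.sqrt (w p.1 * w p.2) * c p.1 p.2)
    calc ∑ p ∈ Finset.univ.offDiag, w p.1 * w p.2 * c p.1 p.2
        = ∑ p ∈ Finset.univ.offDiag,
            Real.sqrt (w p.1 * w p.2) * (Real.sqrt (w p.1 * w p.2) * c p.1 p.2) := by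
          apply Finset.sum_congr rfl; intro p _
          rw [← mul_assoc, Real.mul_self_sqrt (hW p)]
      _ ≤ Real.sqrt (∑ p ∈ Finset.univ.offDiag, Real.sqrt (w p.1 * w p.2)^2) *
            Real.sqrt (∑ p ∈ Finset.univ.offDiag, (Real.sqrt (w p.1 * w p.2) * c p.1 p.2)^2) :=
          h1
      _ = Real.sqrt A * Real.sqrt B := by
          congr 1
          · congr 1
            apply Finset.sum_congr rfl; intro p _
            exact Real.sq_sqrt (hW p)
          · congr 1
            apply Finset.sum_congr rfl; intro p _
            rw [mul_pow, Real.sq_sqrt (hW p)]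
  -- lower bound on h
  have hh0 : (d : ℝ)^2 / m ≤ h := by
    have := sq_sum_le_card_mul_sum_sq (s := (Finset.univ : Finset (Fin m))) (f := w)
    rw [hwsum] at this
    simp only [Finset.card_univ, Fintype.card_fin] at this
    rw [div_le_iff₀ hm']
    calc (d:ℝ)^2 ≤ m * ∑ j, w j ^ 2 := by exact_mod_cast this
      _ = h * m := by rw [hh]; ring
  -- main chain
  have hs := split (fun p => w p.1 * w p.2 * c p.1 p.2)
  simp only at hs
  have goal_eq : ∑ j, ∑ k, w j * w k * ‖star (v j) ⬝ᵥ v k‖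
      = h + ∑ p ∈ Finset.univ.offDiag, w p.1 * w p.2 * c p.1 p.2 := by
    rw [hs]
    congr 1
    rw [hh]
    apply Finset.sum_congr rfl; intro j _
    rw [hcd]; ring
  rw [goal_eq]
  set h0 := (d : ℝ)^2 / m with hh0def
  have ht : 0 ≤ h - h0 := sub_nonneg.mpr hh0
  have key := sqrt_mono_step A B (h - h0) hA0 hB0 ht
  have hAt : A + (h - h0) = (d:ℝ)^2 - h0 := by linarith [hAeq]
  have hBt : B + (h - h0) = (d:ℝ) - h0 := by linarith [hBeq]
  rw [hAt, hBt] at key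
  have sAB : Real.sqrt A * Real.sqrt B = Real.sqrt (A * B) := (Real.sqrt_mul hA0 B).symm
  have hfin : h + ∑ p ∈ Finset.univ.offDiag, w p.1 * w p.2 * c p.1 p.2 ≤
      h0 + Real.sqrt (((d:ℝ)^2 - h0) * ((d:ℝ) - h0)) := by
    calc h + ∑ p ∈ Finset.univ.offDiag, w p.1 * w p.2 * c p.1 p.2
        ≤ h + Real.sqrt (A * B) := by rw [← sAB]; linarith [cs]
      _ = h0 + ((h - h0) + Real.sqrt (A * B)) := by ring
      _ ≤ h0 + Real.sqrt (((d:ℝ)^2 - h0) * ((d:ℝ) - h0)) := by linarith [key]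
  refine hfin.trans (le_of_eq ?_)
  congr 1
  have hrw : ((d:ℝ)^2 - h0) * ((d:ℝ) - h0)
      = ((d:ℝ)/m)^2 * ((d:ℝ) * ((m:ℝ) - 1) * ((m:ℝ) - (d:ℝ))) := by
    rw [hh0def]
    field_simp
  rw [hrw, Real.sqrt_mul (sq_nonneg _), Real.sqrt_sq (by positivity)]
end

section
/- Let 𝒮 = {(|ψ_j⟩, w_j)} and 𝒯 = {(|φ_k⟩, w'_k)} be two 1-designs in a d-dimensional Hilbert space (positive weights summing to d in each family, weighted projectors summing to the identity). Then the cross frame potential Φ_{1/2}(𝒮,𝒯) := Σ_{j,k} w_j w'_k |⟨ψ_j|φ_k⟩| satisfies d ≤ Φ_{1/2}(𝒮,𝒯) ≤ d^{3/2}, and the upper bound holds with equality iff |⟨ψ_j|φ_k⟩|² = 1/d for all j, k. -/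
open Matrix

/-- bounds for the cross frame potential `Φ_{1/2}(𝒮,𝒯)` of two
1-designs, with the equality condition for the upper bound. -/
theorem stmt_7 (d m n : ℕ) (hd : 1 ≤ d)
    (v : Fin m → Fin d → ℂ) (w : Fin m → ℝ)
    (u : Fin n → Fin d → ℂ) (w' : Fin n → ℝ)
    (hw : ∀ j, 0 < w j) (hw' : ∀ k, 0 < w' k)
    (hwsum : ∑ j, w j = d) (hw'sum : ∑ k, w' k = d)
    (hvunit : ∀ j, star (v j) ⬝ᵥ v j = 1) (huunit : ∀ k, star (u k) ⬝ᵥ u k = 1)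
    (hvdesign : ∑ j, (w j : ℂ) • Matrix.vecMulVec (v j) (star (v j)) = 1)
    (hudesign : ∑ k, (w' k : ℂ) • Matrix.vecMulVec (u k) (star (u k)) = 1) :
    (d : ℝ) ≤ ∑ j, ∑ k, w j * w' k * ‖star (v j) ⬝ᵥ u k‖ ∧
    ∑ j, ∑ k, w j * w' k * ‖star (v j) ⬝ᵥ u k‖ ≤ (d : ℝ) * Real.sqrt d ∧
    (∑ j, ∑ k, w j * w' k * ‖star (v j) ⬝ᵥ u k‖ = (d : ℝ) * Real.sqrt d ↔
      ∀ j k, ‖star (v j) ⬝ᵥ u k‖ ^ 2 = 1 / (d : ℝ)) := by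
  set a : Fin m → Fin n → ℝ := fun j k => ‖star (v j) ⬝ᵥ u k‖ with ha
  have hd0 : (0 : ℝ) < d := by exact_mod_cast hd
  have hs : 0 < Real.sqrt d := Real.sqrt_pos.mpr hd0
  have hs2 : Real.sqrt d * Real.sqrt d = d := Real.mul_self_sqrt hd0.le
  set t : ℝ := 1 / Real.sqrt d with htdef
  have ht : t * Real.sqrt d = 1 := by
    rw [htdef]; field_simp
  have ht2 : t ^ 2 = 1 / d := by
    rw [htdef, div_pow, one_pow, sq, hs2]
  have ht0 : 0 < t := by positivity
  -- the second cross frame potential equals d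
  have hkey : ∑ j, ∑ k, w j * w' k * a j k ^ 2 = d := by
    have htrAB : ∀ (x b c e : Fin d → ℂ),
        Matrix.trace (vecMulVec x b * vecMulVec c e) = (b ⬝ᵥ c) * (e ⬝ᵥ x) := by
      intro x b c e
      simp only [Matrix.trace, Matrix.diag, Matrix.mul_apply, Matrix.vecMulVec_apply,
        dotProduct, Finset.sum_mul_sum]
      rw [Finset.sum_comm]
      congr 1; ext i; congr 1; ext l; ring
    have hconj : ∀ (x y : Fin d → ℂ), star y ⬝ᵥ x = starRingEnd ℂ (star x ⬝ᵥ y) := by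
      intro x y; simp [dotProduct, Pi.star_apply, map_sum, mul_comm]
    have h1 : ∑ j, ∑ k, ((w j : ℂ) * (w' k : ℂ) *
        ((‖star (v j) ⬝ᵥ u k‖ : ℝ) : ℂ) ^ 2) = (d : ℂ) := by
      have hC : Matrix.trace ((∑ j, (w j : ℂ) • Matrix.vecMulVec (v j) (star (v j))) *
          (∑ k, (w' k : ℂ) • Matrix.vecMulVec (u k) (star (u k)))) = (d : ℂ) := by
        rw [hvdesign, hudesign, one_mul, Matrix.trace_one]
        simp
      rw [Finset.sum_mul] at hC
      rw [Matrix.trace_sum] at hC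
      simp only [Finset.mul_sum, smul_mul_assoc, mul_smul_comm, Matrix.trace_sum,
        Matrix.trace_smul, smul_smul, smul_eq_mul] at hC
      rw [← hC]
      refine Finset.sum_congr rfl fun j _ => Finset.sum_congr rfl fun k _ => ?_
      rw [htrAB, hconj (v j) (u k)]
      have hz : (star (v j) ⬝ᵥ u k) * starRingEnd ℂ (star (v j) ⬝ᵥ u k)
          = ((‖star (v j) ⬝ᵥ u k‖ : ℝ) : ℂ) ^ 2 := by
        rw [Complex.mul_conj, Complex.normSq_eq_norm_sq]; push_cast; ring
      rw [hz]; ring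
    have h2 : ((∑ j, ∑ k, w j * w' k * ‖star (v j) ⬝ᵥ u k‖ ^ 2 : ℝ) : ℂ)
        = (d : ℂ) := by
      push_cast
      exact h1
    exact_mod_cast h2
  -- unit overlap bound
  have habs : ∀ j k, a j k ≤ 1 := by
    intro j k
    have hin : ∀ (x y : Fin d → ℂ), (inner ℂ ((WithLp.equiv 2 (Fin d → ℂ)).symm x)
        ((WithLp.equiv 2 (Fin d → ℂ)).symm y) : ℂ) = star x ⬝ᵥ y := by
      intro x y
      simp [PiLp.inner_apply, dotProduct, Pi.star_apply, mul_comm]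
    set X := (WithLp.equiv 2 (Fin d → ℂ)).symm (v j)
    set Y := (WithLp.equiv 2 (Fin d → ℂ)).symm (u k)
    have hX : ‖X‖ = 1 := by
      have := norm_eq_sqrt_re_inner (𝕜 := ℂ) X
      rw [this, hin (v j) (v j), hvunit j]
      simp
    have hY : ‖Y‖ = 1 := by
      have := norm_eq_sqrt_re_inner (𝕜 := ℂ) Y
      rw [this, hin (u k) (u k), huunit k]
      simp
    have := norm_inner_le_norm (𝕜 := ℂ) X Y
    rw [hin (v j) (u k), hX, hY] at this
    simpa [ha] using this
  have hanonneg : ∀ j k, 0 ≤ a j k := fun j k => norm_nonneg _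
  set S : ℝ := ∑ j, ∑ k, w j * w' k * a j k with hS
  -- total weight product
  have hCsum : ∑ j, ∑ k, w j * w' k = (d : ℝ) * d := by
    rw [← Finset.sum_mul_sum, hwsum, hw'sum]
  -- the nonnegative "variance" sum
  set E : ℝ := ∑ j, ∑ k, w j * w' k * (a j k - t) ^ 2 with hE
  have hE0 : 0 ≤ E := by
    refine Finset.sum_nonneg fun j _ => Finset.sum_nonneg fun k _ => ?_
    have := (hw j).le
    have := (hw' k).le
    positivity
  have hsplit : E = (∑ j, ∑ k, w j * w' k * a j k ^ 2) - 2 * t * S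
      + t ^ 2 * (∑ j, ∑ k, w j * w' k) := by
    rw [hE, hS, Finset.mul_sum, Finset.mul_sum, ← Finset.sum_sub_distrib,
      ← Finset.sum_add_distrib]
    refine Finset.sum_congr rfl fun j _ => ?_
    rw [Finset.mul_sum, Finset.mul_sum, ← Finset.sum_sub_distrib, ← Finset.sum_add_distrib]
    refine Finset.sum_congr rfl fun k _ => ?_
    ring
  have hEeq : E = 2 * d - 2 * t * S := by
    rw [hsplit, hkey, hCsum, ht2]
    field_simp
    ring
  -- lower bound
  have hlow : (d : ℝ) ≤ S := by
    rw [← hkey, hS]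
    refine Finset.sum_le_sum fun j _ => Finset.sum_le_sum fun k _ => ?_
    have h1 : a j k ^ 2 ≤ a j k := by
      nlinarith [habs j k, hanonneg j k]
    have h2 : 0 ≤ w j * w' k := mul_nonneg (hw j).le (hw' k).le
    nlinarith
  -- upper bound
  have hup : S ≤ (d : ℝ) * Real.sqrt d := by
    have h1 : t * S ≤ d := by linarith
    have h2 : t * S * Real.sqrt d ≤ (d : ℝ) * Real.sqrt d :=
      mul_le_mul_of_nonneg_right h1 hs.le
    calc S = t * S * Real.sqrt d := by
            rw [mul_comm t S, mul_assoc, ht, mul_one]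
      _ ≤ (d : ℝ) * Real.sqrt d := h2
  refine ⟨hlow, hup, ?_, ?_⟩
  · -- equality implies flatness
    intro hSeq
    intro j k
    have hEzero : E = 0 := by
      rw [hEeq, hSeq]
      have : t * ((d : ℝ) * Real.sqrt d) = d := by
        rw [mul_comm (d : ℝ) (Real.sqrt d), ← mul_assoc, ht, one_mul]
      nlinarith
    have hinner : ∀ j ∈ Finset.univ, (0:ℝ) ≤ ∑ k, w j * w' k * (a j k - t) ^ 2 := by
      intro j _
      refine Finset.sum_nonneg fun k _ => ?_
      have := (hw j).le; have := (hw' k).le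
      positivity
    have h1 := (Finset.sum_eq_zero_iff_of_nonneg hinner).mp hEzero.symm.symm j
        (Finset.mem_univ j)
    have hinner2 : ∀ k ∈ Finset.univ, (0:ℝ) ≤ w j * w' k * (a j k - t) ^ 2 := by
      intro k _
      have := (hw j).le; have := (hw' k).le
      positivity
    have h2 := (Finset.sum_eq_zero_iff_of_nonneg hinner2).mp h1 k (Finset.mem_univ k)
    have hwpos : 0 < w j * w' k := mul_pos (hw j) (hw' k)
    have h3 : (a j k - t) ^ 2 = 0 :=
      (mul_eq_zero.mp h2).resolve_left (ne_of_gt hwpos)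
    have h4 : a j k = t := sub_eq_zero.mp (sq_eq_zero_iff.mp h3)
    show a j k ^ 2 = 1 / (d : ℝ)
    rw [h4, ht2]
  · -- flatness implies equality
    intro hflat
    have hat : ∀ j k, a j k = t := by
      intro j k
      have h1 : a j k ^ 2 = t ^ 2 := by rw [hflat j k, ht2]
      have h2 := congrArg Real.sqrt h1
      rwa [Real.sqrt_sq (hanonneg j k), Real.sqrt_sq ht0.le] at h2
    show S = (d : ℝ) * Real.sqrt d
    have : S = (∑ j, ∑ k, w j * w' k) * t := by
      rw [hS, Finset.sum_mul]
      refine Finset.sum_congr rfl fun j _ => ?_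
      rw [Finset.sum_mul]
      exact Finset.sum_congr rfl fun k _ => by rw [hat j k]
    rw [this, hCsum, htdef, mul_one_div, div_eq_iff (ne_of_gt hs), mul_assoc, hs2]
end

section
/- Suppose 0 < a² ≤ b ≤ a < 1 and p₁, p₂, x₁, x₂ are real numbers with 0 ≤ x₁ ≤ x₂ ≤ 1, 0 ≤ p₁, p₂ ≤ 1, p₁ + p₂ = 1, p₁x₁ + p₂x₂ = a, and p₁x₁² + p₂x₂² = b. Then a·√(a/b) ≤ p₁√x₁ + p₂√x₂ ≤ ζ(a,b), where ζ(a,b) = (b − a² + (1−a)√((1−a)(a−b)))/(1 − 2a + b). -/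
/-- The function ζ(a,b) from the paper. -/
noncomputable def zeta (a b : ℝ) : ℝ :=
  (b - a ^ 2 + (1 - a) * Real.sqrt ((1 - a) * (a - b))) / (1 - 2 * a + b)

lemma aux_sqrt_eq (p x : ℝ) (hp : 0 ≤ p) (hx : 0 ≤ x) (h : p * x * (1 - x) = 0) :
    p * Real.sqrt x = p * x := by
  rcases eq_or_lt_of_le hp with h0 | hp0
  · simp [← h0]
  · have hx0 : x * (1 - x) = 0 := by
      have := mul_eq_zero.mp (by linarith [h] : p * (x * (1 - x)) = 0)
      rcases this with h' | h'
      · exact absurd h' (ne_of_gt hp0)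
      · exact h'
    rcases mul_eq_zero.mp hx0 with h' | h'
    · simp [h']
    · have : x = 1 := by linarith
      simp [this]

set_option maxHeartbeats 1600000 in
/-- two-point half-moment bounds. -/
theorem stmt_9 (a b p₁ p₂ x₁ x₂ : ℝ)
    (ha2 : 0 < a ^ 2) (hab : a ^ 2 ≤ b) (hba : b ≤ a) (ha1 : a < 1)
    (hx1 : 0 ≤ x₁) (hx12 : x₁ ≤ x₂) (hx2 : x₂ ≤ 1)
    (hp1 : 0 ≤ p₁) (hp1' : p₁ ≤ 1) (hp2 : 0 ≤ p₂) (hp2' : p₂ ≤ 1)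
    (hsum : p₁ + p₂ = 1) (hmean : p₁ * x₁ + p₂ * x₂ = a)
    (hsec : p₁ * x₁ ^ 2 + p₂ * x₂ ^ 2 = b) :
    a * Real.sqrt (a / b) ≤ p₁ * Real.sqrt x₁ + p₂ * Real.sqrt x₂ ∧
      p₁ * Real.sqrt x₁ + p₂ * Real.sqrt x₂ ≤ zeta a b := by
  have hb0 : 0 < b := lt_of_lt_of_le ha2 hab
  have ha0 : 0 < a := lt_of_lt_of_le hb0 hba
  have hx2' : 0 ≤ x₂ := le_trans hx1 hx12
  set t1 := Real.sqrt x₁ with ht1def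
  set t2 := Real.sqrt x₂ with ht2def
  have ht1n : 0 ≤ t1 := Real.sqrt_nonneg _
  have ht2n : 0 ≤ t2 := Real.sqrt_nonneg _
  have ht1sq : t1 ^ 2 = x₁ := Real.sq_sqrt hx1
  have ht2sq : t2 ^ 2 = x₂ := Real.sq_sqrt hx2'
  have ht2le : t2 ≤ 1 := Real.sqrt_le_one.mpr hx2
  have ht1le : t1 ≤ 1 := le_trans (Real.sqrt_le_sqrt hx12) ht2le
  have ha' : p₁ * t1 ^ 2 + p₂ * t2 ^ 2 = a := by rw [ht1sq, ht2sq]; exact hmean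
  have hb' : p₁ * t1 ^ 4 + p₂ * t2 ^ 4 = b := by
    have e1 : t1 ^ 4 = x₁ ^ 2 := by rw [← ht1sq]; ring
    have e2 : t2 ^ 4 = x₂ ^ 2 := by rw [← ht2sq]; ring
    rw [e1, e2]; exact hsec
  clear_value t1 t2
  constructor
  · -- lower bound
    set A := p₁ * t1 + p₂ * t2 with hAdef
    set M := p₁ * t1 ^ 3 + p₂ * t2 ^ 3 with hMdef
    have hCS1 : a ^ 2 ≤ A * M := by
      have key : (p₁ * t1 ^ 2 + p₂ * t2 ^ 2) ^ 2 ≤ A * M := by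
        rw [hAdef, hMdef]
        nlinarith [mul_nonneg (mul_nonneg hp1 hp2)
          (mul_nonneg (mul_nonneg ht1n ht2n) (sq_nonneg (t1 - t2)))]
      rw [ha'] at key; exact key
    have hCS2 : M ^ 2 ≤ a * b := by
      have key : M ^ 2 ≤
          (p₁ * t1 ^ 2 + p₂ * t2 ^ 2) * (p₁ * t1 ^ 4 + p₂ * t2 ^ 4) := by
        rw [hMdef]
        nlinarith [mul_nonneg (mul_nonneg hp1 hp2)
          (mul_nonneg (mul_nonneg (mul_nonneg ht1n ht1n) (mul_nonneg ht2n ht2n))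
            (sq_nonneg (t1 - t2)))]
      rw [ha', hb'] at key; exact key
    have hA : 0 ≤ A :=
      add_nonneg (mul_nonneg hp1 ht1n) (mul_nonneg hp2 ht2n)
    have h4 : a ^ 4 ≤ A ^ 2 * (a * b) := by
      calc a ^ 4 = (a ^ 2) ^ 2 := by ring
        _ ≤ (A * M) ^ 2 := pow_le_pow_left₀ ha2.le hCS1 2
        _ = A ^ 2 * M ^ 2 := by ring
        _ ≤ A ^ 2 * (a * b) := mul_le_mul_of_nonneg_left hCS2 (sq_nonneg A)
    have h3 : a ^ 3 ≤ A ^ 2 * b := by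
      have hh : a * a ^ 3 ≤ a * (A ^ 2 * b) := by
        calc a * a ^ 3 = a ^ 4 := by ring
          _ ≤ A ^ 2 * (a * b) := h4
          _ = a * (A ^ 2 * b) := by ring
      exact le_of_mul_le_mul_left hh ha0
    have hrn : 0 ≤ Real.sqrt (a / b) := Real.sqrt_nonneg _
    have hr : Real.sqrt (a / b) ^ 2 = a / b := Real.sq_sqrt (by positivity)
    have harsq : (a * Real.sqrt (a / b)) ^ 2 * b = a ^ 3 := by
      rw [mul_pow, hr]; field_simp
    have h2 : (a * Real.sqrt (a / b)) ^ 2 ≤ A ^ 2 := by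
      have hh : (a * Real.sqrt (a / b)) ^ 2 * b ≤ A ^ 2 * b := by
        rw [harsq]; exact h3
      exact le_of_mul_le_mul_right hh hb0
    calc a * Real.sqrt (a / b) = Real.sqrt ((a * Real.sqrt (a / b)) ^ 2) :=
          (Real.sqrt_sq (by positivity)).symm
      _ ≤ Real.sqrt (A ^ 2) := Real.sqrt_le_sqrt h2
      _ = A := Real.sqrt_sq hA
  · -- upper bound
    rcases eq_or_lt_of_le hba with heq | hlt
    · -- b = a
      have hx11 : x₁ ≤ 1 := le_trans hx12 hx2
      have h0 : p₁ * x₁ * (1 - x₁) + p₂ * x₂ * (1 - x₂) = 0 := by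
        linear_combination hmean - hsec - heq
      have hn1 : 0 ≤ p₁ * x₁ * (1 - x₁) :=
        mul_nonneg (mul_nonneg hp1 hx1) (by linarith)
      have hn2 : 0 ≤ p₂ * x₂ * (1 - x₂) :=
        mul_nonneg (mul_nonneg hp2 hx2') (by linarith)
      have e1 : p₁ * x₁ * (1 - x₁) = 0 := by linarith
      have e2 : p₂ * x₂ * (1 - x₂) = 0 := by linarith
      have s1 := aux_sqrt_eq p₁ x₁ hp1 hx1 e1
      have s2 := aux_sqrt_eq p₂ x₂ hp2 hx2' e2
      have hz : zeta a b = a := by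
        unfold zeta
        rw [heq, sub_self, mul_zero, Real.sqrt_zero, mul_zero, add_zero]
        rw [div_eq_iff (by intro h; nlinarith : (1 : ℝ) - 2 * a + a ≠ 0)]
        ring
      rw [hz, ht1def, ht2def] at *
      rw [s1, s2, hmean]
    · -- b < a
      have h1a : 0 < 1 - a := by linarith
      have hd : 0 < a - b := by linarith
      set s := Real.sqrt ((a - b) / (1 - a)) with hsdef
      have hs0 : 0 < s := Real.sqrt_pos.mpr (by positivity)
      have hs2 : s ^ 2 = (a - b) / (1 - a) := Real.sq_sqrt (by positivity)
      have hsrel : s ^ 2 * (1 - a) = a - b := by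
        rw [hs2]; field_simp
      have hbrep : b = a - s ^ 2 * (1 - a) := by linarith
      clear_value s
      have hsqrt : Real.sqrt ((1 - a) * (a - b)) = (1 - a) * s := by
        have e : (1 - a) * (a - b) = ((1 - a) * s) ^ 2 := by
          linear_combination (a - 1) * hsrel
        rw [e, Real.sqrt_sq (by positivity)]
      have key : ∀ t : ℝ, 0 ≤ t → t ≤ 1 → 0 ≤ (t - s) ^ 2 * (1 - t) * (1 + 2 * s + t) :=
        fun t h0t h1t => mul_nonneg (mul_nonneg (sq_nonneg _) (by linarith)) (by linarith)
      have k1 := mul_nonneg hp1 (key t1 ht1n ht1le)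
      have k2 := mul_nonneg hp2 (key t2 ht2n ht2le)
      have hmain : 2 * s * (1 + s) ^ 2 * (p₁ * t1 + p₂ * t2) ≤
          s ^ 2 * (1 + 2 * s) * (p₁ + p₂) +
            (1 + 2 * s + 3 * s ^ 2) * (p₁ * t1 ^ 2 + p₂ * t2 ^ 2) -
            (p₁ * t1 ^ 4 + p₂ * t2 ^ 4) := by linarith [k1, k2]
      rw [hsum, ha', hb', mul_one] at hmain
      have hD : 0 < 1 - 2 * a + b := by nlinarith [sq_nonneg (1 - a)]
      have hpos : 0 < 2 * s * (1 + s) ^ 2 := by positivity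
      have hzeta_eq : zeta a b * (2 * s * (1 + s) ^ 2) =
          s ^ 2 * (1 + 2 * s) + (1 + 2 * s + 3 * s ^ 2) * a - b := by
        unfold zeta
        rw [hsqrt, div_mul_eq_mul_div, div_eq_iff (ne_of_gt hD)]
        rw [hbrep]; ring
      have h2 : (p₁ * t1 + p₂ * t2) * (2 * s * (1 + s) ^ 2) ≤
          zeta a b * (2 * s * (1 + s) ^ 2) := by
        rw [hzeta_eq]; linarith
      exact le_of_mul_le_mul_right h2 hpos
end

section
/- Suppose 0 < a² ≤ b ≤ a < 1, and x₁, …, x_m ∈ [0,1] and p₁, …, p_m ∈ [0,1] satisfy Σ_j p_j = 1, Σ_j p_j x_j = a, and Σ_j p_j x_j² = b. Then a·√(a/b) ≤ Σ_j p_j √x_j ≤ ζ(a,b), where ζ(a,b) = (b − a² + (1−a)√((1−a)(a−b)))/(1 − 2a + b). -/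
set_option maxHeartbeats 1000000 in
/-- half-moment bounds for a finitely supported [0,1]-valued
random variable with first moment a and second moment b. -/
theorem stmt_10 (m : ℕ) (a b : ℝ) (x p : Fin m → ℝ)
    (ha2 : 0 < a ^ 2) (hab : a ^ 2 ≤ b) (hba : b ≤ a) (ha1 : a < 1)
    (hx : ∀ j, 0 ≤ x j) (hx' : ∀ j, x j ≤ 1)
    (hp : ∀ j, 0 ≤ p j) (hp' : ∀ j, p j ≤ 1)
    (hsum : ∑ j, p j = 1) (hmean : ∑ j, p j * x j = a)
    (hsec : ∑ j, p j * x j ^ 2 = b) :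
    a * Real.sqrt (a / b) ≤ ∑ j, p j * Real.sqrt (x j) ∧
      ∑ j, p j * Real.sqrt (x j) ≤ zeta a b := by
  have ha0 : 0 < a := by nlinarith
  have hb0 : 0 < b := by nlinarith
  set S := ∑ j, p j * Real.sqrt (x j) with hSdef
  have hsq : ∀ j, Real.sqrt (x j) ^ 2 = x j := fun j => Real.sq_sqrt (hx j)
  have hs0 : ∀ j, 0 ≤ Real.sqrt (x j) := fun j => Real.sqrt_nonneg _
  have hs1 : ∀ j, Real.sqrt (x j) ≤ 1 := fun j => Real.sqrt_le_one.mpr (hx' j)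
  -- lower bound
  have hT0 : 0 ≤ ∑ j, p j * (x j * Real.sqrt (x j)) :=
    Finset.sum_nonneg fun j _ => mul_nonneg (hp j) (mul_nonneg (hx j) (hs0 j))
  have hS0 : 0 ≤ S := Finset.sum_nonneg fun j _ => mul_nonneg (hp j) (hs0 j)
  have cs1 : (∑ j, p j * x j) ^ 2 ≤
      (∑ j, p j * Real.sqrt (x j)) * ∑ j, p j * (x j * Real.sqrt (x j)) := by
    apply Finset.sum_sq_le_sum_mul_sum_of_sq_eq_mul
    · exact fun j _ => mul_nonneg (hp j) (hs0 j)
    · exact fun j _ => mul_nonneg (hp j) (mul_nonneg (hx j) (hs0 j))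
    · intro j _
      linear_combination (-(p j ^ 2 * x j)) * hsq j
  have cs2 : (∑ j, p j * (x j * Real.sqrt (x j))) ^ 2 ≤
      (∑ j, p j * x j) * ∑ j, p j * x j ^ 2 := by
    apply Finset.sum_sq_le_sum_mul_sum_of_sq_eq_mul
    · exact fun j _ => mul_nonneg (hp j) (hx j)
    · exact fun j _ => mul_nonneg (hp j) (pow_nonneg (hx j) 2)
    · intro j _
      linear_combination (p j ^ 2 * x j ^ 2) * hsq j
  rw [hmean] at cs1
  rw [hmean, hsec] at cs2
  have hT_le : ∑ j, p j * (x j * Real.sqrt (x j)) ≤ Real.sqrt (a * b) := by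
    rw [← Real.sqrt_sq hT0]
    exact Real.sqrt_le_sqrt cs2
  have hsab : 0 < Real.sqrt (a * b) := Real.sqrt_pos.mpr (by positivity)
  have hlow : a * Real.sqrt (a / b) ≤ S := by
    have h1 : a ^ 2 ≤ S * Real.sqrt (a * b) := by
      calc a ^ 2 ≤ S * ∑ j, p j * (x j * Real.sqrt (x j)) := cs1
        _ ≤ S * Real.sqrt (a * b) := mul_le_mul_of_nonneg_left hT_le hS0
    have hsa : 0 < Real.sqrt a := Real.sqrt_pos.mpr ha0
    have hsb : 0 < Real.sqrt b := Real.sqrt_pos.mpr hb0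
    have h2 : a * Real.sqrt (a / b) = a ^ 2 / Real.sqrt (a * b) := by
      rw [Real.sqrt_div ha0.le, Real.sqrt_mul ha0.le]
      rw [eq_div_iff (by positivity)]
      have h3 := Real.sq_sqrt ha0.le
      field_simp
      linear_combination h3
    rw [h2, div_le_iff₀ hsab]
    exact h1
  refine ⟨hlow, ?_⟩
  -- upper bound
  have hden : (0:ℝ) < 1 - 2 * a + b := by nlinarith
  by_cases hEq : a = b
  · -- a = b: distribution supported on {0,1}, S = a, zeta a a = a
    have hzero : ∑ j, p j * (x j - x j ^ 2) = 0 := by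
      rw [Finset.sum_congr rfl fun j _ => (mul_sub (p j) (x j) (x j ^ 2)),
        Finset.sum_sub_distrib, hmean, hsec, hEq, sub_self]
    have hterm : ∀ j ∈ Finset.univ, p j * (x j - x j ^ 2) = 0 := by
      rw [← Finset.sum_eq_zero_iff_of_nonneg]
      · exact hzero
      · intro j _
        exact mul_nonneg (hp j) (by nlinarith [hx j, hx' j])
    have hSa : S = a := by
      rw [hSdef, ← hmean]
      apply Finset.sum_congr rfl
      intro j _
      have h := hterm j (Finset.mem_univ j)
      rcases mul_eq_zero.mp h with h1 | h2
      · rw [h1]; ring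
      · have : x j * (1 - x j) = 0 := by nlinarith
        rcases mul_eq_zero.mp this with h3 | h4
        · rw [h3, Real.sqrt_zero]
        · have : x j = 1 := by linarith
          rw [this, Real.sqrt_one]
    rw [hSa, zeta, ← hEq, sub_self, mul_zero, Real.sqrt_zero, mul_zero, add_zero]
    rw [le_div_iff₀ (by linarith : (0:ℝ) < 1 - 2 * a + a)]
    nlinarith
  · -- b < a
    have hba' : b < a := lt_of_le_of_ne hba fun h => hEq h.symm
    have h1a : (0:ℝ) < 1 - a := by linarith
    set t := Real.sqrt ((a - b) / (1 - a)) with htdef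
    have htpos : 0 < t := Real.sqrt_pos.mpr (div_pos (by linarith) h1a)
    have ht2 : t ^ 2 = (a - b) / (1 - a) := Real.sq_sqrt (div_nonneg (by linarith) h1a.le)
    have hbt : a - b = t ^ 2 * (1 - a) := by
      rw [ht2]; field_simp
    have ht1 : t < 1 := by
      have htlt : t ^ 2 < 1 := by
        rw [ht2, div_lt_one h1a]; nlinarith [sq_nonneg (1 - a)]
      nlinarith [htpos.le]
    -- pointwise bound
    have hpt : ∀ j ∈ Finset.univ, p j * (2 * t * (1 + t) ^ 2 * Real.sqrt (x j)) ≤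
        p j * (t ^ 2 * (1 + 2 * t) + (1 + 2 * t + 3 * t ^ 2) * x j - x j ^ 2) := by
      intro j _
      apply mul_le_mul_of_nonneg_left _ (hp j)
      have h1 : 0 ≤ (Real.sqrt (x j) - t) ^ 2 *
          ((1 - Real.sqrt (x j)) * (Real.sqrt (x j) + 1 + 2 * t)) := by
        apply mul_nonneg (sq_nonneg _)
        apply mul_nonneg (by linarith [hs1 j]) (by linarith [hs0 j, htpos])
      have hid : t ^ 2 * (1 + 2 * t) + (1 + 2 * t + 3 * t ^ 2) * x j
          - x j ^ 2 - 2 * t * (1 + t) ^ 2 * Real.sqrt (x j)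
          = (Real.sqrt (x j) - t) ^ 2 *
            ((1 - Real.sqrt (x j)) * (Real.sqrt (x j) + 1 + 2 * t)) := by
        linear_combination (x j + Real.sqrt (x j) ^ 2 - (1 + 2 * t + 3 * t ^ 2)) * hsq j
      linarith [h1, hid]
    have hsum_le := Finset.sum_le_sum hpt
    have hL : ∑ j, p j * (2 * t * (1 + t) ^ 2 * Real.sqrt (x j)) =
        2 * t * (1 + t) ^ 2 * S := by
      rw [hSdef, Finset.mul_sum]
      exact Finset.sum_congr rfl fun j _ => by ring
    have hR : ∑ j, p j * (t ^ 2 * (1 + 2 * t) + (1 + 2 * t + 3 * t ^ 2) * x j - x j ^ 2) =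
        t ^ 2 * (1 + 2 * t) * (∑ j, p j) + (1 + 2 * t + 3 * t ^ 2) * (∑ j, p j * x j)
          - ∑ j, p j * x j ^ 2 := by
      rw [Finset.mul_sum, Finset.mul_sum, ← Finset.sum_add_distrib, ← Finset.sum_sub_distrib]
      exact Finset.sum_congr rfl fun j _ => by ring
    rw [hL, hR, hsum, hmean, hsec] at hsum_le
    have hkey : 2 * t * (1 + t) ^ 2 * S ≤ 2 * t * (1 + t) * (a + t) := by
      calc 2 * t * (1 + t) ^ 2 * S ≤
          t ^ 2 * (1 + 2 * t) * 1 + (1 + 2 * t + 3 * t ^ 2) * a - b := hsum_le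
        _ = 2 * t * (1 + t) * (a + t) := by linear_combination hbt
    have hSle : S ≤ (a + t) / (1 + t) := by
      rw [le_div_iff₀ (by linarith : (0:ℝ) < 1 + t)]
      nlinarith [hkey, mul_pos htpos (by linarith : (0:ℝ) < 1 + t)]
    have hzeta : zeta a b = (a + t) / (1 + t) := by
      have hsq' : Real.sqrt ((1 - a) * (a - b)) = (1 - a) * t := by
        rw [hbt, show (1 - a) * (t ^ 2 * (1 - a)) = ((1 - a) * t) ^ 2 by ring]
        exact Real.sqrt_sq (by positivity)
      rw [zeta, hsq', div_eq_div_iff hden.ne' (by positivity : (1:ℝ) + t ≠ 0)]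
      linear_combination (a - 1) * hbt
    rw [hzeta]
    exact hSle
end

section
/- Let 𝒜 = {A_j} be a POVM on a d-dimensional Hilbert space. Define the one-copy estimation fidelity F(𝒜) = 1/(d+1) + (1/(d(d+1)))·Σ_j ‖A_j‖, where ‖·‖ is the operator norm. Then 1/d ≤ F(𝒜) ≤ 2/(d+1); the lower bound is attained iff every A_j is proportional to the identity, and the upper bound is attained iff every A_j has rank 1. -/
open scoped ComplexOrder Matrix.Norms.L2Operator

/-- One-copy estimation fidelity of a POVM (‖·‖ is the ℓ²-operator norm). -/
noncomputable def oneCopyFid (d m : ℕ) (A : Fin m → Matrix (Fin d) (Fin d) ℂ) : ℝ :=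
  1 / ((d : ℝ) + 1) + (1 / ((d : ℝ) * ((d : ℝ) + 1))) * ∑ j, ‖A j‖

open Matrix

lemma aux_diag_le {n : Type*} [Fintype n] [DecidableEq n] (v : n → ℂ) {M : ℝ}
    (hM : 0 ≤ M) (h : ∀ i, ‖v i‖ ≤ M) : ‖diagonal v‖ ≤ M := by
  rw [Matrix.l2_opNorm_def]
  refine ContinuousLinearMap.opNorm_le_bound _ hM fun x => ?_
  set y := (LinearEquiv.trans toEuclideanLin LinearMap.toContinuousLinearMap (diagonal v)) x with hy
  have h2 : ∀ i, y i = v i * x i := by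
    intro i
    simp [hy, Matrix.toEuclideanLin_apply, Matrix.mulVec_diagonal]
  rw [EuclideanSpace.norm_eq, EuclideanSpace.norm_eq]
  have key : (∑ i, ‖y i‖^2) = ∑ i, ‖v i‖^2 * ‖x i‖^2 := by
    refine Finset.sum_congr rfl fun i _ => ?_
    rw [h2 i, norm_mul, mul_pow]
  rw [key]
  have h3 : (∑ i, ‖v i‖^2 * ‖x i‖^2) ≤ ∑ i, M^2 * ‖x i‖^2 := by
    refine Finset.sum_le_sum fun i _ => ?_
    have h4 : ‖v i‖^2 ≤ M^2 := pow_le_pow_left₀ (norm_nonneg _) (h i) 2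
    exact mul_le_mul_of_nonneg_right h4 (by positivity)
  calc Real.sqrt (∑ i, ‖v i‖^2 * ‖x i‖^2) ≤ Real.sqrt (∑ i, M^2 * ‖x i‖^2) := Real.sqrt_le_sqrt h3
    _ = M * Real.sqrt (∑ i, ‖x i‖^2) := by
        rw [← Finset.mul_sum, Real.sqrt_mul (by positivity), Real.sqrt_sq hM]

lemma aux_diag_ge {n : Type*} [Fintype n] [DecidableEq n] (v : n → ℂ) (i : n) :
    ‖v i‖ ≤ ‖diagonal v‖ := by
  have h := Matrix.l2_opNorm_mulVec (diagonal v) (EuclideanSpace.single i 1)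
  rw [EuclideanSpace.norm_single] at h
  norm_num at h
  simpa using h

lemma aux_norm_eq_diag {d : ℕ} {A : Matrix (Fin d) (Fin d) ℂ} (hA : A.IsHermitian) :
    ‖A‖ = ‖diagonal (RCLike.ofReal ∘ hA.eigenvalues : Fin d → ℂ)‖ := by
  conv_lhs => rw [hA.spectral_theorem]
  rw [Unitary.conjStarAlgAut_apply, mul_assoc, CStarRing.norm_coe_unitary_mul, ← Unitary.coe_star,
    CStarRing.norm_mul_coe_unitary]

lemma aux_trace_eq {d : ℕ} {A : Matrix (Fin d) (Fin d) ℂ} (hA : A.IsHermitian) :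
    A.trace = ((∑ i, hA.eigenvalues i : ℝ) : ℂ) := by
  conv_lhs => rw [hA.spectral_theorem]
  rw [Unitary.conjStarAlgAut_apply, Matrix.trace_mul_cycle, Matrix.mem_unitaryGroup_iff'.mp (hA.eigenvectorUnitary).2,
    one_mul, Matrix.trace_diagonal]
  push_cast
  rfl

/-- bounds on the one-copy estimation fidelity, with the
trivial-POVM and rank-1 equality conditions. -/
theorem stmt_12 (d m : ℕ) (hd : 1 ≤ d) (A : Fin m → Matrix (Fin d) (Fin d) ℂ)
    (hpos : ∀ j, (A j).PosSemidef) (hnz : ∀ j, A j ≠ 0)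
    (hsum : ∑ j, A j = 1) :
    (1 / (d : ℝ) ≤ oneCopyFid d m A) ∧
    (oneCopyFid d m A ≤ 2 / ((d : ℝ) + 1)) ∧
    (oneCopyFid d m A = 1 / (d : ℝ) ↔
      ∀ j, ∃ c : ℂ, A j = c • (1 : Matrix (Fin d) (Fin d) ℂ)) ∧
    (oneCopyFid d m A = 2 / ((d : ℝ) + 1) ↔ ∀ j, (A j).rank = 1) := by
  classical
  have hD : (0:ℝ) < d := by exact_mod_cast hd
  haveI : Nonempty (Fin d) := ⟨⟨0, hd⟩⟩
  have hherm : ∀ j, (A j).IsHermitian := fun j => (hpos j).1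
  have hev0 : ∀ j i, 0 ≤ (hherm j).eigenvalues i := fun j i => (hpos j).eigenvalues_nonneg i
  -- a maximal eigenvalue index for each j
  have hex : ∀ j, ∃ i0, ∀ i, (hherm j).eigenvalues i ≤ (hherm j).eigenvalues i0 := by
    intro j
    obtain ⟨i0, -, h⟩ := Finset.exists_max_image Finset.univ ((hherm j).eigenvalues)
      ⟨Classical.arbitrary (Fin d), Finset.mem_univ _⟩
    exact ⟨i0, fun i => h i (Finset.mem_univ i)⟩
  choose i0 hi0 using hex
  -- the operator norm is the top eigenvalue
  have hnorm : ∀ j, ‖A j‖ = (hherm j).eigenvalues (i0 j) := by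
    intro j
    rw [aux_norm_eq_diag (hherm j)]
    refine le_antisymm ?_ ?_
    · refine aux_diag_le _ (hev0 j _) fun i => ?_
      simp only [Function.comp_apply, RCLike.norm_ofReal]
      rw [abs_of_nonneg (hev0 j i)]
      exact hi0 j i
    · have h := aux_diag_ge (RCLike.ofReal ∘ (hherm j).eigenvalues) (i0 j)
      simpa [abs_of_nonneg (hev0 j (i0 j))] using h
  have hnorm_le_all : ∀ j i, (hherm j).eigenvalues i ≤ ‖A j‖ := fun j i =>
    (hnorm j) ▸ hi0 j i
  -- traces
  have hτsum : (∑ j, ∑ i, (hherm j).eigenvalues i) = (d:ℝ) := by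
    have h1 : ∑ j, (A j).trace = (d : ℂ) := by
      rw [← Matrix.trace_sum, hsum, Matrix.trace_one]
      simp
    have h2 : ((∑ j, ∑ i, (hherm j).eigenvalues i : ℝ) : ℂ) = (d:ℂ) := by
      push_cast
      rw [← h1]
      exact (Finset.sum_congr rfl fun j _ => by
        rw [aux_trace_eq (hherm j)]; push_cast; ring).symm
    exact_mod_cast h2
  -- per-j inequalities
  have h_n_le_τ : ∀ j, ‖A j‖ ≤ ∑ i, (hherm j).eigenvalues i := by
    intro j
    rw [hnorm j]
    exact Finset.single_le_sum (fun i _ => hev0 j i) (Finset.mem_univ _)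
  have h_τd_le_n : ∀ j, (∑ i, (hherm j).eigenvalues i) / d ≤ ‖A j‖ := by
    intro j
    rw [div_le_iff₀ hD]
    calc (∑ i, (hherm j).eigenvalues i) ≤ ∑ _i : Fin d, ‖A j‖ :=
          Finset.sum_le_sum fun i _ => hnorm_le_all j i
      _ = ‖A j‖ * d := by simp [Finset.sum_const, mul_comm]
  set S : ℝ := ∑ j, ‖A j‖ with hSdef
  have hτdsum : (∑ j, (∑ i, (hherm j).eigenvalues i) / d) = 1 := by
    rw [← Finset.sum_div, hτsum, div_self (ne_of_gt hD)]
  have hS1 : 1 ≤ S := by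
    rw [← hτdsum]
    exact Finset.sum_le_sum fun j _ => h_τd_le_n j
  have hSd : S ≤ (d:ℝ) := by
    rw [← hτsum]
    exact Finset.sum_le_sum fun j _ => h_n_le_τ j
  -- the fidelity formula
  have hkey : oneCopyFid d m A = ((d:ℝ) + S) / (d * (d+1)) := by
    unfold oneCopyFid
    rw [← hSdef]
    field_simp
  have hFiff1 : oneCopyFid d m A = 1 / (d:ℝ) ↔ S = 1 := by
    rw [hkey, div_eq_div_iff (by positivity) (ne_of_gt hD)]
    constructor <;> intro h <;> nlinarith
  have hFiff2 : oneCopyFid d m A = 2 / ((d:ℝ)+1) ↔ S = d := by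
    rw [hkey, div_eq_div_iff (by positivity) (by positivity)]
    constructor <;> intro h <;> nlinarith
  -- pointwise equality characterizations
  have hSiff1 : S = 1 ↔ ∀ j, (∑ i, (hherm j).eigenvalues i) / d = ‖A j‖ := by
    rw [hSdef, ← hτdsum]
    rw [eq_comm]
    rw [Finset.sum_eq_sum_iff_of_le fun j _ => h_τd_le_n j]
    constructor
    · intro h j; exact h j (Finset.mem_univ j)
    · intro h j _; exact h j
  have hSiff2 : S = (d:ℝ) ↔ ∀ j, ‖A j‖ = ∑ i, (hherm j).eigenvalues i := by
    rw [hSdef, ← hτsum]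
    rw [Finset.sum_eq_sum_iff_of_le fun j _ => h_n_le_τ j]
    constructor
    · intro h j; exact h j (Finset.mem_univ j)
    · intro h j _; exact h j
  refine ⟨?_, ?_, ?_, ?_⟩
  · rw [hkey, div_le_div_iff₀ hD (by positivity)]
    nlinarith
  · rw [hkey, div_le_div_iff₀ (by positivity) (by positivity)]
    nlinarith
  · rw [hFiff1, hSiff1]
    constructor
    · -- all eigenvalues equal ⇒ scalar matrix
      intro h j
      refine ⟨(‖A j‖ : ℂ), ?_⟩
      have heq : ∀ i, (hherm j).eigenvalues i = ‖A j‖ := by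
        have hsum_eq : (∑ i, (hherm j).eigenvalues i) = ∑ _i : Fin d, ‖A j‖ := by
          have := h j
          rw [div_eq_iff (ne_of_gt hD)] at this
          rw [this]
          simp [Finset.sum_const, mul_comm]
        have := (Finset.sum_eq_sum_iff_of_le
          (fun i (_ : i ∈ Finset.univ) => hnorm_le_all j i)).mp hsum_eq
        exact fun i => this i (Finset.mem_univ i)
      have hdiag : (diagonal (RCLike.ofReal ∘ (hherm j).eigenvalues) : Matrix (Fin d) (Fin d) ℂ)
          = (‖A j‖ : ℂ) • 1 := by
        ext i k
        by_cases h' : i = k <;> simp [Matrix.diagonal_apply, Matrix.one_apply, h', heq]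
      conv_lhs => rw [(hherm j).spectral_theorem]
      rw [hdiag, Unitary.conjStarAlgAut_apply, mul_smul_comm, smul_mul_assoc, mul_one,
        Matrix.mem_unitaryGroup_iff.mp ((hherm j).eigenvectorUnitary).2]
    · -- scalar matrices ⇒ equality
      intro h j
      obtain ⟨c, hc⟩ := h j
      -- c is a nonnegative real
      have hc0 : (0:ℂ) ≤ c := by
        have h2 := (posSemidef_iff_dotProduct_mulVec.mp (hpos j)).2 (Pi.single (⟨0, hd⟩ : Fin d) 1)
        rw [hc] at h2
        simpa [Matrix.smul_mulVec, Matrix.one_mulVec, dotProduct, Pi.single_apply,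
          apply_ite, mul_comm] using h2
      obtain ⟨r, hr0, hrc⟩ : ∃ r : ℝ, 0 ≤ r ∧ c = (r:ℂ) := by
        rw [Complex.le_def] at hc0
        exact ⟨c.re, hc0.1, Complex.ext rfl hc0.2.symm⟩
      -- trace computation
      have htr : (A j).trace = c * d := by
        rw [hc]
        simp [Matrix.trace_smul, Matrix.trace_one, mul_comm]
      have hτj : (∑ i, (hherm j).eigenvalues i) = r * d := by
        have := aux_trace_eq (hherm j)
        rw [htr, hrc] at this
        have : ((∑ i, (hherm j).eigenvalues i : ℝ) : ℂ) = ((r * d : ℝ) : ℂ) := by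
          rw [← this]; push_cast; ring
        exact_mod_cast this
      have hnormj : ‖A j‖ = r := by
        rw [hc, hrc]
        haveI : Nontrivial (Matrix (Fin d) (Fin d) ℂ) := by
          refine ⟨0, 1, fun h01 => ?_⟩
          have := congrFun (congrFun h01 ⟨0, hd⟩) ⟨0, hd⟩
          simp [Matrix.one_apply] at this
        rw [norm_smul, norm_one, mul_one]
        simp [abs_of_nonneg hr0]
      rw [hτj, hnormj, mul_div_assoc, div_self (ne_of_gt hD), mul_one]
  · rw [hFiff2, hSiff2]
    constructor
    · -- norm = trace ⇒ rank one
      intro h j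
      rw [(hherm j).rank_eq_card_non_zero_eigs]
      have hnz' : (hherm j).eigenvalues (i0 j) ≠ 0 := by
        rw [← hnorm j]
        exact norm_ne_zero_iff.mpr (hnz j)
      have hzero : ∀ i, i ≠ i0 j → (hherm j).eigenvalues i = 0 := by
        have hsplit : (hherm j).eigenvalues (i0 j)
            + ∑ i ∈ Finset.univ.erase (i0 j), (hherm j).eigenvalues i
            = ∑ i, (hherm j).eigenvalues i :=
          Finset.add_sum_erase _ _ (Finset.mem_univ _)
        have h0 : ∑ i ∈ Finset.univ.erase (i0 j), (hherm j).eigenvalues i = 0 := by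
          have hj := h j
          rw [hnorm j] at hj
          linarith [hsplit, hj]
        intro i hi
        have := (Finset.sum_eq_zero_iff_of_nonneg
          (fun i _ => hev0 j i)).mp h0 i (Finset.mem_erase.mpr ⟨hi, Finset.mem_univ i⟩)
        exact this
      rw [Fintype.card_eq_one_iff]
      refine ⟨⟨i0 j, hnz'⟩, ?_⟩
      rintro ⟨i, hi⟩
      refine Subtype.ext ?_
      by_contra hne
      exact hi (hzero i hne)
    · -- rank one ⇒ norm = trace
      intro h j
      have hcard : Fintype.card {i // (hherm j).eigenvalues i ≠ 0} = 1 := by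
        rw [← (hherm j).rank_eq_card_non_zero_eigs]
        exact h j
      obtain ⟨a, ha⟩ := Fintype.card_eq_one_iff.mp hcard
      have hnz' : (hherm j).eigenvalues (i0 j) ≠ 0 := by
        rw [← hnorm j]
        exact norm_ne_zero_iff.mpr (hnz j)
      have hia : i0 j = (a : Fin d) := congrArg Subtype.val (ha ⟨i0 j, hnz'⟩)
      have hτj : (∑ i, (hherm j).eigenvalues i) = (hherm j).eigenvalues a := by
        refine Finset.sum_eq_single (a : Fin d) (fun i _ hne => ?_)
          (fun hmem => absurd (Finset.mem_univ _) hmem)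
        by_contra hzero
        exact hne (congrArg Subtype.val (ha ⟨i, hzero⟩))
      rw [hτj, hnorm j, hia]
end

section
/- Let |ψ⟩ and |φ⟩ be unit vectors in a finite-dimensional Hilbert space, with rank-1 projectors A = |ψ⟩⟨ψ| and B = |φ⟩⟨φ|, and let Q(A⊗B) = 1 + tr(AB) + A + B + AB + BA (numbers denoting multiples of the identity). Then ‖Q(A⊗B)‖ = 2(1 + |⟨ψ|φ⟩|² + |⟨ψ|φ⟩|). -/
open Matrix
open scoped Matrix.Norms.L2Operator

namespace Stmt14Aux

variable {d : ℕ}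

lemma mul_vecMulVec (a b e f : Fin d → ℂ) :
    vecMulVec a b * vecMulVec e f = (b ⬝ᵥ e) • vecMulVec a f := by
  ext i j
  simp only [mul_apply, vecMulVec_apply, Matrix.smul_apply, dotProduct, smul_eq_mul,
    Finset.sum_mul]
  exact Finset.sum_congr rfl fun k _ => by ring

lemma vecMulVec_mulVec' (a b x : Fin d → ℂ) :
    vecMulVec a b *ᵥ x = (b ⬝ᵥ x) • a := by
  ext i
  simp only [mulVec, vecMulVec_apply, dotProduct, Pi.smul_apply, smul_eq_mul,
    Finset.sum_mul]
  exact Finset.sum_congr rfl fun k _ => by ring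

lemma trace_vecMulVec' (a b : Fin d → ℂ) : (vecMulVec a b).trace = b ⬝ᵥ a := by
  simp only [trace, diag, vecMulVec_apply, dotProduct]
  exact Finset.sum_congr rfl fun k _ => by ring

/-- the Euclidean-space version of a plain vector -/
noncomputable def sym (z : Fin d → ℂ) : EuclideanSpace ℂ (Fin d) :=
  (WithLp.equiv 2 (Fin d → ℂ)).symm z

lemma dot_self_eq (z : Fin d → ℂ) : star z ⬝ᵥ z = ((‖sym z‖ ^ 2 : ℝ) : ℂ) := by
  rw [dotProduct_comm, ← EuclideanSpace.inner_toLp_toLp, Complex.ofReal_pow]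
  exact inner_self_eq_norm_sq_to_K (𝕜 := ℂ) (sym z)

lemma dot_star_comm (a b : Fin d → ℂ) :
    star a ⬝ᵥ b = (starRingEnd ℂ) (star b ⬝ᵥ a) := by
  simp only [dotProduct, map_sum]
  exact Finset.sum_congr rfl fun k _ => by
    simp only [Pi.star_apply, RingHom.map_mul, starRingEnd_apply, star_star]
    ring

variable {v u : Fin d → ℂ}

lemma combo_norm_sq (hv : star v ⬝ᵥ v = 1) (hu : star u ⬝ᵥ u = 1) (a b : ℂ) :
    ‖sym (a • v + b • u)‖ ^ 2 = Complex.normSq a + Complex.normSq b +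
      2 * ((starRingEnd ℂ) a * b * (star v ⬝ᵥ u)).re := by
  have h := (dot_self_eq (a • v + b • u)).symm
  have expand : star (a • v + b • u) ⬝ᵥ (a • v + b • u)
      = ((starRingEnd ℂ) a * a) * (star v ⬝ᵥ v) + ((starRingEnd ℂ) a * b) * (star v ⬝ᵥ u)
        + ((starRingEnd ℂ) b * a) * (star u ⬝ᵥ v) + ((starRingEnd ℂ) b * b) * (star u ⬝ᵥ u) := by
    simp only [star_add, star_smul, add_dotProduct, dotProduct_add, smul_dotProduct,
      dotProduct_smul, smul_eq_mul, RCLike.star_def]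
    ring
  rw [expand, hv, hu, dot_star_comm u v] at h
  have hconj : (starRingEnd ℂ) b * a * (starRingEnd ℂ) (star v ⬝ᵥ u)
      = (starRingEnd ℂ) ((starRingEnd ℂ) a * b * (star v ⬝ᵥ u)) := by
    rw [_root_.map_mul, _root_.map_mul, Complex.conj_conj]
    ring
  rw [mul_one, mul_one, hconj] at h
  have hw : ((starRingEnd ℂ) a * b * (star v ⬝ᵥ u)) +
      (starRingEnd ℂ) ((starRingEnd ℂ) a * b * (star v ⬝ᵥ u))
      = ((2 * ((starRingEnd ℂ) a * b * (star v ⬝ᵥ u)).re : ℝ) : ℂ) :=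
    Complex.add_conj _
  have h2 : ((‖sym (a • v + b • u)‖ ^ 2 : ℝ) : ℂ)
      = ((Complex.normSq a + Complex.normSq b +
          2 * ((starRingEnd ℂ) a * b * (star v ⬝ᵥ u)).re : ℝ) : ℂ) := by
    rw [h, show ((starRingEnd ℂ) a * a + (starRingEnd ℂ) a * b * (star v ⬝ᵥ u) +
        (starRingEnd ℂ) ((starRingEnd ℂ) a * b * (star v ⬝ᵥ u)) + (starRingEnd ℂ) b * b)
        = ((Complex.normSq a : ℂ) + (Complex.normSq b : ℂ) +
          (((starRingEnd ℂ) a * b * (star v ⬝ᵥ u)) +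
            (starRingEnd ℂ) ((starRingEnd ℂ) a * b * (star v ⬝ᵥ u)))) by
      rw [Complex.normSq_eq_conj_mul_self, Complex.normSq_eq_conj_mul_self]; ring,
      hw]
    push_cast
    ring
  exact_mod_cast h2

lemma combo_norm_sq_le (hv : star v ⬝ᵥ v = 1) (hu : star u ⬝ᵥ u = 1) (a b : ℂ) :
    ‖sym (a • v + b • u)‖ ^ 2 ≤
      (1 + ‖star v ⬝ᵥ u‖) * (Complex.normSq a + Complex.normSq b) := by
  rw [combo_norm_sq hv hu]
  have h1 : ((starRingEnd ℂ) a * b * (star v ⬝ᵥ u)).re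
      ≤ ‖a‖ * ‖b‖ * ‖star v ⬝ᵥ u‖ := by
    calc ((starRingEnd ℂ) a * b * (star v ⬝ᵥ u)).re
        ≤ ‖(starRingEnd ℂ) a * b * (star v ⬝ᵥ u)‖ := Complex.re_le_norm _
      _ = ‖a‖ * ‖b‖ * ‖star v ⬝ᵥ u‖ := by
          simp [_root_.map_mul, Complex.norm_conj]
  nlinarith [two_mul_le_add_sq (‖a‖) (‖b‖), Complex.sq_norm a,
    Complex.sq_norm b, norm_nonneg (star v ⬝ᵥ u), norm_nonneg a,
    norm_nonneg b, norm_nonneg (star v ⬝ᵥ u),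
    mul_nonneg (norm_nonneg a) (norm_nonneg b)]

lemma key (hv : star v ⬝ᵥ v = 1) (hu : star u ⬝ᵥ u = 1) (z : Fin d → ℂ) :
    Complex.normSq (star v ⬝ᵥ z) + Complex.normSq (star u ⬝ᵥ z)
      ≤ (1 + ‖star v ⬝ᵥ u‖) * ‖sym z‖ ^ 2 := by
  set p := star v ⬝ᵥ z with hp
  set q := star u ⬝ᵥ z with hq
  set s : ℝ := Complex.normSq p + Complex.normSq q with hs
  have hs0 : 0 ≤ s := add_nonneg (Complex.normSq_nonneg _) (Complex.normSq_nonneg _)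
  have hr0 : (0:ℝ) ≤ 1 + ‖star v ⬝ᵥ u‖ := by positivity
  have hinner : (inner ℂ (sym (p • v + q • u)) (sym z) : ℂ) = (s : ℂ) := by
    rw [sym, sym, WithLp.equiv_symm_apply, EuclideanSpace.inner_toLp_toLp, dotProduct_comm]
    have : star (p • v + q • u) ⬝ᵥ z
        = (starRingEnd ℂ) p * (star v ⬝ᵥ z) + (starRingEnd ℂ) q * (star u ⬝ᵥ z) := by
      simp only [star_add, star_smul, add_dotProduct, smul_dotProduct, smul_eq_mul,
        RCLike.star_def]
    rw [this, ← hp, ← hq, ← Complex.normSq_eq_conj_mul_self, ← Complex.normSq_eq_conj_mul_self]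
    exact (Complex.ofReal_add _ _).symm
  have hcs := norm_inner_le_norm (𝕜 := ℂ) (sym (p • v + q • u)) (sym z)
  rw [hinner] at hcs
  have hls : ‖(s:ℂ)‖ = s := by
    rw [Complex.norm_real, Real.norm_of_nonneg hs0]
  rw [hls] at hcs
  have hbound := combo_norm_sq_le hv hu p q
  rcases eq_or_lt_of_le hs0 with h0 | h0
  · rw [← h0]; positivity
  · have hsq : s ^ 2 ≤ (1 + ‖star v ⬝ᵥ u‖) * s * ‖sym z‖ ^ 2 := by
      have h2 : s ^ 2 ≤ (‖sym (p • v + q • u)‖ * ‖sym z‖) ^ 2 := by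
        have := mul_self_le_mul_self hs0 hcs
        nlinarith
      calc s ^ 2 ≤ (‖sym (p • v + q • u)‖ * ‖sym z‖) ^ 2 := h2
        _ = ‖sym (p • v + q • u)‖ ^ 2 * ‖sym z‖ ^ 2 := by ring
        _ ≤ ((1 + ‖star v ⬝ᵥ u‖) * s) * ‖sym z‖ ^ 2 := by
            exact mul_le_mul_of_nonneg_right hbound (sq_nonneg _)
        _ = (1 + ‖star v ⬝ᵥ u‖) * s * ‖sym z‖ ^ 2 := by ring
    nlinarith

lemma combo_norm_le (hv : star v ⬝ᵥ v = 1) (hu : star u ⬝ᵥ u = 1) (z : Fin d → ℂ) :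
    ‖sym ((star v ⬝ᵥ z) • v + (star u ⬝ᵥ z) • u)‖
      ≤ (1 + ‖star v ⬝ᵥ u‖) * ‖sym z‖ := by
  have h1 := combo_norm_sq_le hv hu (star v ⬝ᵥ z) (star u ⬝ᵥ z)
  have h2 := key hv hu z
  have hr0 : (0:ℝ) ≤ 1 + ‖star v ⬝ᵥ u‖ := by positivity
  have h3 : ‖sym ((star v ⬝ᵥ z) • v + (star u ⬝ᵥ z) • u)‖ ^ 2
      ≤ ((1 + ‖star v ⬝ᵥ u‖) * ‖sym z‖) ^ 2 := by
    calc ‖sym ((star v ⬝ᵥ z) • v + (star u ⬝ᵥ z) • u)‖ ^ 2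
        ≤ (1 + ‖star v ⬝ᵥ u‖) *
            (Complex.normSq (star v ⬝ᵥ z) + Complex.normSq (star u ⬝ᵥ z)) := h1
      _ ≤ (1 + ‖star v ⬝ᵥ u‖) *
            ((1 + ‖star v ⬝ᵥ u‖) * ‖sym z‖ ^ 2) :=
          mul_le_mul_of_nonneg_left h2 hr0
      _ = ((1 + ‖star v ⬝ᵥ u‖) * ‖sym z‖) ^ 2 := by ring
  calc ‖sym ((star v ⬝ᵥ z) • v + (star u ⬝ᵥ z) • u)‖
      = Real.sqrt (‖sym ((star v ⬝ᵥ z) • v + (star u ⬝ᵥ z) • u)‖ ^ 2) :=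
        (Real.sqrt_sq (norm_nonneg _)).symm
    _ ≤ Real.sqrt (((1 + ‖star v ⬝ᵥ u‖) * ‖sym z‖) ^ 2) := Real.sqrt_le_sqrt h3
    _ = (1 + ‖star v ⬝ᵥ u‖) * ‖sym z‖ := Real.sqrt_sq (by positivity)

end Stmt14Aux

open Stmt14Aux

/-- for rank-1 projectors `A = |ψ⟩⟨ψ|`, `B = |φ⟩⟨φ|` built from
unit vectors, `‖Q(A⊗B)‖ = 2(1 + |⟨ψ|φ⟩|² + |⟨ψ|φ⟩|)`. -/
theorem stmt_14 (d : ℕ) (v u : Fin d → ℂ)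
    (hv : star v ⬝ᵥ v = 1) (hu : star u ⬝ᵥ u = 1) :
    ‖((Matrix.vecMulVec v (star v)).trace * (Matrix.vecMulVec u (star u)).trace) •
          (1 : Matrix (Fin d) (Fin d) ℂ) +
        (Matrix.vecMulVec v (star v) * Matrix.vecMulVec u (star u)).trace •
          (1 : Matrix (Fin d) (Fin d) ℂ) +
        (Matrix.vecMulVec u (star u)).trace • Matrix.vecMulVec v (star v) +
        (Matrix.vecMulVec v (star v)).trace • Matrix.vecMulVec u (star u) +
        Matrix.vecMulVec v (star v) * Matrix.vecMulVec u (star u) +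
        Matrix.vecMulVec u (star u) * Matrix.vecMulVec v (star v)‖ =
      2 * (1 + ‖star v ⬝ᵥ u‖ ^ 2 + ‖star v ⬝ᵥ u‖) := by
  classical
  set c : ℂ := star v ⬝ᵥ u with hc
  set r : ℝ := ‖c‖ with hrdef
  have hr0 : (0:ℝ) ≤ r := norm_nonneg c
  set A : Matrix (Fin d) (Fin d) ℂ := vecMulVec v (star v) with hA
  set B : Matrix (Fin d) (Fin d) ℂ := vecMulVec u (star u) with hB
  have trA : A.trace = 1 := by rw [hA, trace_vecMulVec', hv]
  have trB : B.trace = 1 := by rw [hB, trace_vecMulVec', hu]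
  have hABm : A * B = c • vecMulVec v (star u) := by
    rw [hA, hB, Stmt14Aux.mul_vecMulVec, ← hc]
  have trAB : (A * B).trace = ((r ^ 2 : ℝ) : ℂ) := by
    rw [hABm, trace_smul, trace_vecMulVec', dot_star_comm u v, ← hc, smul_eq_mul,
      Complex.mul_conj]
    exact congrArg _ (Complex.sq_norm c).symm
  have hAA : A * A = A := by rw [hA, Stmt14Aux.mul_vecMulVec, hv, one_smul]
  have hBB : B * B = B := by rw [hB, Stmt14Aux.mul_vecMulVec, hu, one_smul]
  set P : Matrix (Fin d) (Fin d) ℂ := A + B with hP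
  have hQ : (A.trace * B.trace) • (1 : Matrix (Fin d) (Fin d) ℂ) + (A * B).trace • 1 +
        B.trace • A + A.trace • B + A * B + B * A
      = ((1 : ℂ) + ((r ^ 2 : ℝ) : ℂ)) • (1 : Matrix (Fin d) (Fin d) ℂ) + P * P := by
    rw [trA, trB, trAB, hP, add_mul, mul_add, mul_add, hAA, hBB]
    module
  rw [hQ]
  set N : Matrix (Fin d) (Fin d) ℂ :=
    ((1 : ℂ) + ((r ^ 2 : ℝ) : ℂ)) • (1 : Matrix (Fin d) (Fin d) ℂ) + P * P with hN
  have hPmul : ∀ z : Fin d → ℂ, P *ᵥ z = (star v ⬝ᵥ z) • v + (star u ⬝ᵥ z) • u := fun z => by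
    rw [hP, add_mulVec, hA, hB, vecMulVec_mulVec', vecMulVec_mulVec']
  have hPnorm : ∀ z : Fin d → ℂ, ‖sym (P *ᵥ z)‖ ≤ (1 + r) * ‖sym z‖ := fun z => by
    rw [hPmul z]
    rw [hrdef, hc]
    exact combo_norm_le hv hu z
  have hstep : ∀ z : Fin d → ℂ,
      N *ᵥ z = ((1 : ℂ) + ((r ^ 2 : ℝ) : ℂ)) • z + P *ᵥ (P *ᵥ z) := fun z => by
    rw [hN, add_mulVec, smul_mulVec, one_mulVec, ← mulVec_mulVec]
  have hnormscal : ‖(1 : ℂ) + ((r ^ 2 : ℝ) : ℂ)‖ = 1 + r ^ 2 := by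
    rw [show (1 : ℂ) + ((r ^ 2 : ℝ) : ℂ) = (((1 + r ^ 2 : ℝ)) : ℂ) by push_cast; ring,
      Complex.norm_real, Real.norm_of_nonneg (by positivity)]
  -- upper bound
  have upper : ‖N‖ ≤ 2 * (1 + r ^ 2 + r) := by
    rw [Matrix.l2_opNorm_def]
    apply ContinuousLinearMap.opNorm_le_bound _ (by positivity)
    intro x
    set z : Fin d → ℂ := WithLp.equiv 2 (Fin d → ℂ) x with hz
    have happ : (Matrix.toEuclideanLin.trans LinearMap.toContinuousLinearMap) N x
        = sym (N *ᵥ z) := rfl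
    have hxz : ‖x‖ = ‖sym z‖ := rfl
    rw [happ, hxz, hstep]
    have hsplit : sym (((1 : ℂ) + ((r ^ 2 : ℝ) : ℂ)) • z + P *ᵥ (P *ᵥ z))
        = ((1 : ℂ) + ((r ^ 2 : ℝ) : ℂ)) • sym z + sym (P *ᵥ (P *ᵥ z)) := by
      rfl
    rw [hsplit]
    calc ‖((1 : ℂ) + ((r ^ 2 : ℝ) : ℂ)) • sym z + sym (P *ᵥ (P *ᵥ z))‖
        ≤ ‖((1 : ℂ) + ((r ^ 2 : ℝ) : ℂ)) • sym z‖ + ‖sym (P *ᵥ (P *ᵥ z))‖ := norm_add_le _ _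
      _ ≤ (1 + r ^ 2) * ‖sym z‖ + (1 + r) * ((1 + r) * ‖sym z‖) := by
          refine add_le_add ?_ ((hPnorm _).trans ?_)
          · rw [norm_smul, hnormscal]
          · exact mul_le_mul_of_nonneg_left (hPnorm z) (by positivity)
      _ = 2 * (1 + r ^ 2 + r) * ‖sym z‖ := by ring
  -- the top eigenvector
  set ω : ℂ := if c = 0 then 1 else (starRingEnd ℂ) c / (r : ℝ) with hω
  have hcω : c * ω = (r : ℂ) := by
    by_cases h : c = 0
    · simp [hω, h, hrdef, if_pos h]
    · rw [hω, if_neg h]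
      have hrne : (r : ℂ) ≠ 0 := by
        simpa [hrdef] using Complex.ofReal_ne_zero.mpr ((norm_ne_zero_iff.mpr h))
      field_simp
      rw [Complex.mul_conj]
      norm_cast
      rw [hrdef, ← Complex.sq_norm]
  have hrω : (r : ℂ) * ω = (starRingEnd ℂ) c := by
    by_cases h : c = 0
    · simp [hω, h, hrdef, if_pos h]
    · rw [hω, if_neg h]
      have hrne : (r : ℂ) ≠ 0 := by
        simpa [hrdef] using Complex.ofReal_ne_zero.mpr ((norm_ne_zero_iff.mpr h))
      field_simp
  have hω1 : Complex.normSq ω = 1 := by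
    by_cases h : c = 0
    · rw [hω, if_pos h]; simp
    · have h1 : ‖c * ω‖ = r := by rw [hcω]; simp [abs_of_nonneg hr0]
      rw [norm_mul] at h1
      have h2 : ‖c‖ ≠ 0 := (norm_ne_zero_iff.mpr h)
      have h3 : ‖ω‖ = 1 := by
        have hrne : ‖c‖ ≠ 0 := h2
        have h4 : ‖c‖ * ‖ω‖ = ‖c‖ * 1 := by
          rw [mul_one, ← hrdef]; exact h1
        exact mul_left_cancel₀ hrne h4
      rw [← Complex.sq_norm, h3]; norm_num
  set y : Fin d → ℂ := (1 : ℂ) • v + ω • u with hy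
  have hp0 : star v ⬝ᵥ y = 1 + (r : ℂ) := by
    rw [hy, dotProduct_add, dotProduct_smul, dotProduct_smul, hv, ← hc, smul_eq_mul,
      smul_eq_mul, mul_one, mul_comm, hcω]
  have hq0 : star u ⬝ᵥ y = (1 + (r : ℂ)) * ω := by
    rw [hy, dotProduct_add, dotProduct_smul, dotProduct_smul, hu, dot_star_comm u v, ← hc,
      smul_eq_mul, smul_eq_mul, mul_one, ← hrω]
    ring
  have hPy : P *ᵥ y = (1 + (r : ℂ)) • y := by
    rw [hPmul y, hp0, hq0, hy, smul_add, smul_smul, smul_smul, mul_one]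
  have hNy : N *ᵥ y = ((2 * (1 + r ^ 2 + r) : ℝ) : ℂ) • y := by
    rw [hstep, hPy, mulVec_smul, hPy, smul_smul, ← add_smul]
    congr 1
    push_cast
    ring
  have hysq : ‖sym y‖ ^ 2 = 2 + 2 * r := by
    have := combo_norm_sq hv hu 1 ω
    rw [← hc, ← hy] at this
    rw [this, hω1]
    have : (starRingEnd ℂ) 1 * ω * c = ((r : ℝ) : ℂ) := by
      rw [_root_.map_one, one_mul, mul_comm, hcω]
    rw [this, Complex.ofReal_re, Complex.normSq_one]
    ring
  have hypos : 0 < ‖sym y‖ := by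
    nlinarith [norm_nonneg (sym y), hysq]
  have lower : 2 * (1 + r ^ 2 + r) ≤ ‖N‖ := by
    have hlow : ‖sym (N *ᵥ y)‖ ≤ ‖N‖ * ‖sym y‖ := Matrix.l2_opNorm_mulVec N (sym y)
    rw [hNy] at hlow
    have hsm : ‖sym (((2 * (1 + r ^ 2 + r) : ℝ) : ℂ) • y)‖
        = (2 * (1 + r ^ 2 + r)) * ‖sym y‖ := by
      have e : sym (((2 * (1 + r ^ 2 + r) : ℝ) : ℂ) • y)
          = ((2 * (1 + r ^ 2 + r) : ℝ) : ℂ) • sym y := rfl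
      rw [e, norm_smul, Complex.norm_real, Real.norm_of_nonneg (by positivity)]
    rw [hsm] at hlow
    exact le_of_mul_le_mul_right hlow hypos
  linarith
end

section
/- Let A be a projector of rank r on a d-dimensional Hilbert space and let B be a nonzero rank-1 positive operator with either AB = B or AB = 0. With Q(A⊗B) := tr(A)tr(B)·1 + tr(AB)·1 + tr(B)·A + tr(A)·B + AB + BA, the operator norm satisfies ‖Q(A⊗B)‖ = 2(r+2)·tr(B) if AB = B, and ‖Q(A⊗B)‖ = 2r·tr(B) if AB = 0. Consequently, for any rank-1 POVM 𝒝 = {B_k} all of whose elements satisfy A·B_k = B_k or A·B_k = 0, one has Σ_k ‖Q(A⊗B_k)‖ = 2(d+2)·tr(A). -/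
open scoped ComplexOrder Matrix.Norms.L2Operator

/-- The operator `Q(A⊗B) = tr(A)tr(B)·1 + tr(AB)·1 + tr(B)·A + tr(A)·B + AB + BA`. -/
noncomputable def Qop (d : ℕ) (A B : Matrix (Fin d) (Fin d) ℂ) :
    Matrix (Fin d) (Fin d) ℂ :=
  (A.trace * B.trace) • (1 : Matrix (Fin d) (Fin d) ℂ) +
    (A * B).trace • (1 : Matrix (Fin d) (Fin d) ℂ) +
    B.trace • A + A.trace • B + A * B + B * A

namespace Stmt18Aux

open Matrix

variable {d : ℕ}

lemma smulPSD {M : Matrix (Fin d) (Fin d) ℂ} (hM : M.PosSemidef) {t : ℝ} (ht : 0 ≤ t) :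
    ((t : ℂ) • M).PosSemidef := by
  refine posSemidef_iff_dotProduct_mulVec.mpr ⟨?_, ?_⟩
  · unfold Matrix.IsHermitian
    rw [conjTranspose_smul, hM.1]
    congr 1
    simp [Complex.star_def, Complex.conj_ofReal]
  · intro x
    have h0 := hM.dotProduct_mulVec_nonneg x
    rw [smul_mulVec, dotProduct_smul]
    have h : ((t:ℂ) • (star x ⬝ᵥ M *ᵥ x)) = (t:ℂ) * (star x ⬝ᵥ M *ᵥ x) := rfl
    rw [h]
    exact mul_nonneg (by exact_mod_cast Complex.zero_le_real.mpr ht) h0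

lemma psd_of_sq {N : Matrix (Fin d) (Fin d) ℂ} (hN : N.IsHermitian) {t : ℝ} (ht : 0 < t)
    (h : N * N = (t : ℂ) • N) : N.PosSemidef := by
  have key : N = ((t⁻¹ : ℝ) : ℂ) • (Nᴴ * N) := by
    rw [hN, h, smul_smul, ← Complex.ofReal_mul, inv_mul_cancel₀ ht.ne', Complex.ofReal_one,
      one_smul]
  rw [key]
  exact smulPSD (posSemidef_conjTranspose_mul_self N) (inv_nonneg.mpr ht.le)

lemma norm_ge_of_eig {Q B : Matrix (Fin d) (Fin d) ℂ} (hB : B ≠ 0) {l : ℝ} (hl : 0 ≤ l)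
    (h : Q * B = (l : ℂ) • B) : l ≤ ‖Q‖ := by
  have hBn : 0 < ‖B‖ := norm_pos_iff.mpr hB
  have key : l * ‖B‖ ≤ ‖Q‖ * ‖B‖ := by
    calc l * ‖B‖ = ‖(l : ℂ) • B‖ := by
          rw [norm_smul, Complex.norm_real, Real.norm_eq_abs, abs_of_nonneg hl]
      _ = ‖Q * B‖ := by rw [h]
      _ ≤ ‖Q‖ * ‖B‖ := Matrix.l2_opNorm_mul Q B
  exact le_of_mul_le_mul_right key hBn

lemma norm_le_of_psd {M : Matrix (Fin d) (Fin d) ℂ} (hM : M.PosSemidef) {c : ℝ} (hc : 0 ≤ c)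
    (hle : ((c : ℂ) • (1 : Matrix (Fin d) (Fin d) ℂ) - M).PosSemidef) : ‖M‖ ≤ c := by
  set N := (c : ℂ) • (1 : Matrix (Fin d) (Fin d) ℂ) - M with hN
  obtain ⟨S, hs, hSh⟩ : ∃ S : Matrix (Fin d) (Fin d) ℂ, S * S = M ∧ Sᴴ = S := by
    open scoped MatrixOrder in
    exact ⟨CFC.sqrt M, CFC.sqrt_mul_sqrt_self M (nonneg_iff_posSemidef.mpr hM),
      (nonneg_iff_posSemidef.mp (CFC.sqrt_nonneg M)).1⟩
  have hNh : Nᴴ = N := hle.1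
  have hE1 : (Nᴴ * N).PosSemidef := posSemidef_conjTranspose_mul_self N
  have hE2 : (Sᴴ * N * S).PosSemidef := hle.conjTranspose_mul_mul_same S
  have key : ((c : ℂ)^2) • (1 : Matrix (Fin d) (Fin d) ℂ) - M * M
      = Nᴴ * N + (Sᴴ * N * S + Sᴴ * N * S) := by
    rw [hNh, hSh, hN, ← hs]
    noncomm_ring
    simp only [neg_smul, one_smul, smul_neg, smul_add, smul_smul]
    abel
  have h2 : (((c : ℂ)^2) • (1 : Matrix (Fin d) (Fin d) ℂ) - M * M).PosSemidef := by
    rw [key]; exact hE1.add (hE2.add hE2)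
  rw [Matrix.l2_opNorm_def]
  apply ContinuousLinearMap.opNorm_le_bound _ hc
  intro x
  have hq := h2.dotProduct_mulVec_nonneg x
  have e1 : star x ⬝ᵥ ((M * M) *ᵥ x) = star (M *ᵥ x) ⬝ᵥ (M *ᵥ x) := by
    rw [star_mulVec, hM.1, ← mulVec_mulVec, dotProduct_mulVec]
  have e2 : star x ⬝ᵥ ((((c : ℂ)^2) • (1 : Matrix (Fin d) (Fin d) ℂ)) *ᵥ x)
      = ((c : ℂ)^2) * (star x ⬝ᵥ x) := by
    rw [smul_mulVec, one_mulVec, dotProduct_smul, smul_eq_mul]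
  rw [sub_mulVec, dotProduct_sub, e1, e2] at hq
  have hq' : (star (M *ᵥ x) ⬝ᵥ (M *ᵥ x)).re ≤ ((c : ℂ)^2 * (star x ⬝ᵥ x)).re := by
    exact (Complex.le_def.mp (sub_nonneg.mp hq)).1
  have h1 : ‖Matrix.toEuclideanLin M x‖ ^ 2 = (star (M *ᵥ x) ⬝ᵥ (M *ᵥ x)).re := by
    have h := inner_self_eq_norm_sq (𝕜 := ℂ) (Matrix.toEuclideanLin M x)
    simp only [RCLike.re_to_complex] at h
    rw [← h, EuclideanSpace.inner_eq_star_dotProduct, dotProduct_comm]; rfl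
  have h2x : ‖x‖ ^ 2 = (star x ⬝ᵥ x).re := by
    have h := inner_self_eq_norm_sq (𝕜 := ℂ) x
    simp only [RCLike.re_to_complex] at h
    rw [← h, EuclideanSpace.inner_eq_star_dotProduct, dotProduct_comm]
  have hyx : ‖Matrix.toEuclideanLin M x‖ ^ 2 ≤ (c * ‖x‖) ^ 2 := by
    rw [h1, mul_pow, h2x]
    calc (star (M *ᵥ x) ⬝ᵥ (M *ᵥ x)).re ≤ (((c:ℂ)^2) * (star x ⬝ᵥ x)).re := hq'
      _ = c ^ 2 * (star x ⬝ᵥ x).re := by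
          simp [Complex.mul_re, ← Complex.ofReal_pow]
  have hfin : ‖Matrix.toEuclideanLin M x‖ ≤ c * ‖x‖ := by
    nlinarith [norm_nonneg (Matrix.toEuclideanLin M x), mul_nonneg hc (norm_nonneg x)]
  exact hfin

lemma conj_mul {U D E : Matrix (Fin d) (Fin d) ℂ} (hU : star U * U = 1) :
    (U * D * star U) * (U * E * star U) = U * (D * E) * star U := by
  have h : star U * (U * (E * star U)) = E * star U := by rw [← mul_assoc, hU, one_mul]
  simp only [mul_assoc, h]

lemma conj_cancel {U : Matrix (Fin d) (Fin d) ℂ} (hU : star U * U = 1)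
    {X Y : Matrix (Fin d) (Fin d) ℂ} (h : U * X * star U = U * Y * star U) : X = Y := by
  calc X = (star U * U) * X * (star U * U) := by rw [hU, one_mul, mul_one]
    _ = star U * (U * X * star U) * U := by noncomm_ring
    _ = star U * (U * Y * star U) * U := by rw [h]
    _ = (star U * U) * Y * (star U * U) := by noncomm_ring
    _ = Y := by rw [hU, one_mul, mul_one]

lemma trace_conj {U D : Matrix (Fin d) (Fin d) ℂ} (hU : star U * U = 1) :
    (U * D * star U).trace = D.trace := by
  rw [trace_mul_cycle, hU, one_mul]

lemma proj_eigs {A : Matrix (Fin d) (Fin d) ℂ} (hproj : A * A = A) (hherm : A.IsHermitian)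
    (i : Fin d) : hherm.eigenvalues i = 0 ∨ hherm.eigenvalues i = 1 := by
  set U : Matrix (Fin d) (Fin d) ℂ := (hherm.eigenvectorUnitary : Matrix (Fin d) (Fin d) ℂ) with hUdef
  set D : Matrix (Fin d) (Fin d) ℂ := diagonal (RCLike.ofReal ∘ hherm.eigenvalues) with hDdef
  have hU : star U * U = 1 := Unitary.coe_star_mul_self hherm.eigenvectorUnitary
  have hsp : A = U * D * star U := hherm.spectral_theorem
  have hDD : D * D = D := by
    apply conj_cancel hU
    rw [← conj_mul hU, ← hsp, hproj]
  rw [hDdef, diagonal_mul_diagonal] at hDD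
  have h := congrFun (congrFun hDD i) i
  simp only [diagonal_apply_eq, Pi.mul_apply, Function.comp_apply] at h
  have h' : hherm.eigenvalues i * hherm.eigenvalues i = hherm.eigenvalues i := by
    exact_mod_cast h
  have h2 : hherm.eigenvalues i * (hherm.eigenvalues i - 1) = 0 := by ring_nf; linarith
  rcases mul_eq_zero.mp h2 with h0 | h1
  · exact Or.inl h0
  · exact Or.inr (by linarith [sub_eq_zero.mp h1])

lemma trace_eq_rank_of_proj {A : Matrix (Fin d) (Fin d) ℂ} (hproj : A * A = A)
    (hherm : A.IsHermitian) : A.trace = (A.rank : ℂ) := by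
  classical
  set U : Matrix (Fin d) (Fin d) ℂ := (hherm.eigenvectorUnitary : Matrix (Fin d) (Fin d) ℂ)
  set D : Matrix (Fin d) (Fin d) ℂ := diagonal (RCLike.ofReal ∘ hherm.eigenvalues) with hDdef
  have hU : star U * U = 1 := Unitary.coe_star_mul_self hherm.eigenvectorUnitary
  have hsp : A = U * D * star U := hherm.spectral_theorem
  have htr : A.trace = ∑ i, ((hherm.eigenvalues i : ℝ) : ℂ) := by
    have e := (congrArg Matrix.trace hsp).trans (trace_conj hU)
    rw [hDdef, trace_diagonal] at e
    simpa [Function.comp] using e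
  have hrk : A.rank = Fintype.card {i // hherm.eigenvalues i ≠ 0} :=
    hherm.rank_eq_card_non_zero_eigs
  have hsum : ∑ i, ((hherm.eigenvalues i : ℝ) : ℂ)
      = ((Finset.univ.filter (fun i => hherm.eigenvalues i ≠ 0)).card : ℂ) := by
    rw [Finset.card_eq_sum_ones, Nat.cast_sum, Finset.sum_filter]
    apply Finset.sum_congr rfl
    intro i _
    rcases proj_eigs hproj hherm i with h0 | h1
    · simp [h0]
    · simp [h1]
  have hcard : A.rank = (Finset.univ.filter (fun i => hherm.eigenvalues i ≠ 0)).card :=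
    hrk.trans (Fintype.card_subtype _)
  rw [htr, hsum, hcard]

lemma eq_zero_of_rank_zero {A : Matrix (Fin d) (Fin d) ℂ} (hherm : A.IsHermitian)
    (h : A.rank = 0) : A = 0 := by
  classical
  have hrk : A.rank = Fintype.card {i // hherm.eigenvalues i ≠ 0} :=
    hherm.rank_eq_card_non_zero_eigs
  rw [h] at hrk
  have hempty : ∀ i, hherm.eigenvalues i = 0 := by
    intro i
    by_contra hne
    have hpos : 0 < Fintype.card {i // hherm.eigenvalues i ≠ 0} :=
      Fintype.card_pos_iff.mpr ⟨⟨i, hne⟩⟩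
    omega
  have hdz : diagonal (RCLike.ofReal ∘ hherm.eigenvalues) = (0 : Matrix (Fin d) (Fin d) ℂ) := by
    rw [show RCLike.ofReal ∘ hherm.eigenvalues = fun _ => (0:ℂ) from funext fun i => by
      simp [hempty i], diagonal_zero]
  calc A = _ := hherm.spectral_theorem
    _ = 0 := by rw [hdz]; simp

lemma rank_one_facts {B : Matrix (Fin d) (Fin d) ℂ} (hB : B.PosSemidef) (h1 : B.rank = 1) :
    ∃ t : ℝ, 0 < t ∧ B.trace = (t : ℂ) ∧ B * B = (t : ℂ) • B := by
  classical
  set U : Matrix (Fin d) (Fin d) ℂ := (hB.1.eigenvectorUnitary : Matrix (Fin d) (Fin d) ℂ)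
  set v : Fin d → ℝ := hB.1.eigenvalues with hvdef
  set D : Matrix (Fin d) (Fin d) ℂ := diagonal (RCLike.ofReal ∘ v) with hDdef
  have hU : star U * U = 1 := Unitary.coe_star_mul_self hB.1.eigenvectorUnitary
  have hsp : B = U * D * star U := hB.1.spectral_theorem
  have hvnn : ∀ i, 0 ≤ v i := fun i => hB.eigenvalues_nonneg i
  have hrk : Fintype.card {i // v i ≠ 0} = 1 := by
    rw [← hB.1.rank_eq_card_non_zero_eigs, h1]
  obtain ⟨⟨i₀, hi₀⟩, huniq⟩ := Fintype.card_eq_one_iff.mp hrk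
  have hzero : ∀ j, j ≠ i₀ → v j = 0 := by
    intro j hj
    by_contra hne
    exact hj (congrArg Subtype.val (huniq ⟨j, hne⟩))
  refine ⟨v i₀, lt_of_le_of_ne (hvnn i₀) (Ne.symm hi₀), ?_, ?_⟩
  · have e := (congrArg Matrix.trace hsp).trans (trace_conj hU)
    rw [hDdef, trace_diagonal] at e
    rw [Finset.sum_eq_single i₀ (fun j _ hj => by simp [hzero j hj]) (by simp)] at e
    simpa [Function.comp] using e
  · have hBB : B * B = U * (D * D) * star U := by rw [hsp, conj_mul hU]
    have hDD : D * D = (v i₀ : ℂ) • D := by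
      rw [hDdef, diagonal_mul_diagonal]
      ext j k
      rcases eq_or_ne j k with rfl | hjk
      · simp only [diagonal_apply_eq, Matrix.smul_apply, Function.comp_apply, smul_eq_mul]
        rcases eq_or_ne j i₀ with rfl | hj
        · rfl
        · simp [hzero j hj]
      · simp [diagonal_apply_ne _ hjk]
    rw [hBB, hDD, hsp]
    rw [mul_smul_comm, smul_mul_assoc]

/-- Main per-element computation. -/
lemma norm_Qop {r : ℕ} {A B : Matrix (Fin d) (Fin d) ℂ}
    (hproj : A * A = A) (hherm : A.IsHermitian) (hr : A.rank = r)
    (hBpsd : B.PosSemidef) (hBne : B ≠ 0) (hB1 : B.rank = 1) :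
    (A * B = B → ‖Qop d A B‖ = 2 * ((r : ℝ) + 2) * B.trace.re) ∧
    (A * B = 0 → ‖Qop d A B‖ = 2 * (r : ℝ) * B.trace.re) := by
  have htA : A.trace = (r : ℂ) := by rw [trace_eq_rank_of_proj hproj hherm, hr]
  have hApsd : A.PosSemidef := by
    have : A = Aᴴ * A := by rw [hherm, hproj]
    rw [this]; exact posSemidef_conjTranspose_mul_self A
  obtain ⟨t, ht, htB, hBB⟩ := rank_one_facts hBpsd hB1
  have htre : B.trace.re = t := by rw [htB, Complex.ofReal_re]
  constructor
  · -- case A * B = B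
    intro hAB
    have hBA : B * A = B := by
      have h := congrArg Matrix.conjTranspose hAB
      rwa [conjTranspose_mul, hBpsd.1, hherm] at h
    have hQeq : Qop d A B = (((r : ℝ) * t + t : ℝ) : ℂ) • (1 : Matrix (Fin d) (Fin d) ℂ)
        + ((t : ℝ) : ℂ) • A + (((r : ℝ) + 2 : ℝ) : ℂ) • B := by
      unfold Qop
      rw [htA, hAB, hBA, htB]
      push_cast
      module
    have hQpsd : (Qop d A B).PosSemidef := by
      rw [hQeq]
      exact ((smulPSD Matrix.PosSemidef.one (by positivity)).add
        (smulPSD hApsd ht.le)).add (smulPSD hBpsd (by positivity))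
    have hub : ‖Qop d A B‖ ≤ 2 * ((r : ℝ) + 2) * t := by
      apply norm_le_of_psd hQpsd (by positivity)
      have hdec : ((2 * ((r : ℝ) + 2) * t : ℝ) : ℂ) • (1 : Matrix (Fin d) (Fin d) ℂ)
          - Qop d A B
          = ((t : ℝ) : ℂ) • ((1 : Matrix (Fin d) (Fin d) ℂ) - A)
            + (((r : ℝ) + 2 : ℝ) : ℂ) • (((t : ℝ) : ℂ) • (1 : Matrix (Fin d) (Fin d) ℂ) - B) := by
        rw [hQeq]
        push_cast
        module
      rw [hdec]
      have p1 : ((1 : Matrix (Fin d) (Fin d) ℂ) - A).PosSemidef := by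
        apply psd_of_sq (Matrix.isHermitian_one.sub hherm) one_pos
        rw [sub_mul, one_mul, mul_sub, mul_one, hproj]
        push_cast
        module
      have p2 : (((t : ℝ) : ℂ) • (1 : Matrix (Fin d) (Fin d) ℂ) - B).PosSemidef := by
        apply psd_of_sq ((smulPSD Matrix.PosSemidef.one ht.le).1.sub hBpsd.1) ht
        rw [sub_mul, mul_sub, mul_sub, hBB]
        simp only [smul_mul_assoc, mul_smul_comm, one_mul, mul_one, smul_smul]
        module
      exact (smulPSD p1 ht.le).add (smulPSD p2 (by positivity))
    have hlb : 2 * ((r : ℝ) + 2) * t ≤ ‖Qop d A B‖ := by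
      apply norm_ge_of_eig hBne (by positivity)
      rw [hQeq, add_mul, add_mul, smul_mul_assoc, smul_mul_assoc, smul_mul_assoc,
        one_mul, hAB, hBB]
      push_cast
      module
    rw [htre]
    exact le_antisymm hub hlb
  · -- case A * B = 0
    intro hAB
    have hBA : B * A = 0 := by
      have h := congrArg Matrix.conjTranspose hAB
      rwa [conjTranspose_mul, hBpsd.1, hherm, conjTranspose_zero] at h
    rcases Nat.eq_zero_or_pos r with hr0 | hrpos
    · subst hr0
      have hA0 : A = 0 := eq_zero_of_rank_zero hherm (by exact_mod_cast hr)
      have : Qop d A B = 0 := by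
        unfold Qop
        rw [hA0]
        simp
      rw [this, norm_zero]
      simp
    · have hr1 : (1 : ℝ) ≤ (r : ℝ) := by exact_mod_cast hrpos
      have hQeq : Qop d A B = (((r : ℝ) * t : ℝ) : ℂ) • (1 : Matrix (Fin d) (Fin d) ℂ)
          + ((t : ℝ) : ℂ) • A + (((r : ℝ) : ℝ) : ℂ) • B := by
        unfold Qop
        rw [htA, hAB, hBA, htB, trace_zero]
        push_cast
        module
      have hQpsd : (Qop d A B).PosSemidef := by
        rw [hQeq]
        exact ((smulPSD Matrix.PosSemidef.one (by positivity)).add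
          (smulPSD hApsd ht.le)).add (smulPSD hBpsd (by positivity))
      set P : Matrix (Fin d) (Fin d) ℂ := ((t⁻¹ : ℝ) : ℂ) • B with hPdef
      have hPpsd : P.PosSemidef := smulPSD hBpsd (by positivity)
      have htP : ((t : ℝ) : ℂ) • P = B := by
        rw [hPdef, smul_smul, ← Complex.ofReal_mul, mul_inv_cancel₀ ht.ne', Complex.ofReal_one,
          one_smul]
      have hAP : A * P = 0 := by rw [hPdef, mul_smul_comm, hAB, smul_zero]
      have hPA : P * A = 0 := by rw [hPdef, smul_mul_assoc, hBA, smul_zero]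
      have hPP : P * P = P := by
        rw [hPdef, smul_mul_assoc, mul_smul_comm, hBB, smul_smul, smul_smul]
        congr 1
        push_cast
        field_simp
      have hN : ((1 : Matrix (Fin d) (Fin d) ℂ) - A - P).PosSemidef := by
        apply psd_of_sq ((Matrix.isHermitian_one.sub hherm).sub hPpsd.1) one_pos
        simp only [sub_mul, mul_sub, one_mul, mul_one, hproj, hAP, hPA, hPP]
        push_cast
        module
      have hub : ‖Qop d A B‖ ≤ 2 * (r : ℝ) * t := by
        apply norm_le_of_psd hQpsd (by positivity)
        have hdec : ((2 * (r : ℝ) * t : ℝ) : ℂ) • (1 : Matrix (Fin d) (Fin d) ℂ) - Qop d A B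
            = (((r : ℝ) * t : ℝ) : ℂ) • ((1 : Matrix (Fin d) (Fin d) ℂ) - A - P)
              + ((((r : ℝ) - 1) * t : ℝ) : ℂ) • A := by
          rw [hQeq, ← htP]
          push_cast
          module
        rw [hdec]
        exact (smulPSD hN (by positivity)).add
          (smulPSD hApsd (by nlinarith))
      have hlb : 2 * (r : ℝ) * t ≤ ‖Qop d A B‖ := by
        apply norm_ge_of_eig hBne (by positivity)
        rw [hQeq, add_mul, add_mul, smul_mul_assoc, smul_mul_assoc, smul_mul_assoc,
          one_mul, hAB, hBB]
        push_cast
        module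
      rw [htre]
      exact le_antisymm hub hlb

end Stmt18Aux

/-- norms `‖Q(A⊗B)‖` for a rank-r projector A and rank-1 B with
`AB = B` or `AB = 0`, and the summation identity `Σ_k ‖Q(A⊗B_k)‖ = 2(d+2)tr(A)`
for a rank-1 POVM commuting with A elementwise in this way. -/
theorem stmt_18 (d r : ℕ) (A : Matrix (Fin d) (Fin d) ℂ)
    (hproj : A * A = A) (hherm : A.IsHermitian) (hr : A.rank = r) :
    (∀ B : Matrix (Fin d) (Fin d) ℂ, B.PosSemidef → B ≠ 0 → B.rank = 1 →
      (A * B = B → ‖Qop d A B‖ = 2 * ((r : ℝ) + 2) * B.trace.re) ∧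
      (A * B = 0 → ‖Qop d A B‖ = 2 * (r : ℝ) * B.trace.re)) ∧
    (∀ (n : ℕ) (B : Fin n → Matrix (Fin d) (Fin d) ℂ),
      (∀ k, (B k).PosSemidef) → (∀ k, (B k).rank = 1) → (∑ k, B k = 1) →
      (∀ k, A * B k = B k ∨ A * B k = 0) →
      ∑ k, ‖Qop d A (B k)‖ = 2 * ((d : ℝ) + 2) * A.trace.re) := by
  have htA : A.trace = (r : ℂ) := by rw [Stmt18Aux.trace_eq_rank_of_proj hproj hherm, hr]
  have htAre : A.trace.re = (r : ℝ) := by rw [htA]; simp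
  constructor
  · intro B hBpsd hBne hB1
    exact Stmt18Aux.norm_Qop hproj hherm hr hBpsd hBne hB1
  · intro n B hpsd hrank hsum hcomm
    have key : ∀ k, ‖Qop d A (B k)‖
        = 2 * (r : ℝ) * (B k).trace.re + 4 * ((A * B k).trace.re) := by
      intro k
      have hBne : B k ≠ 0 := by
        intro h0
        have := hrank k
        rw [h0, Matrix.rank_zero] at this
        exact one_ne_zero this.symm
      have hk := Stmt18Aux.norm_Qop hproj hherm hr (hpsd k) hBne (hrank k)
      rcases hcomm k with hin | hout
      · rw [hk.1 hin, hin]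
        ring
      · rw [hk.2 hout, hout]
        simp
    calc ∑ k, ‖Qop d A (B k)‖
        = ∑ k, (2 * (r : ℝ) * (B k).trace.re + 4 * ((A * B k).trace.re)) := by
          exact Finset.sum_congr rfl fun k _ => key k
      _ = 2 * (r : ℝ) * (∑ k, (B k).trace.re) + 4 * (∑ k, ((A * B k).trace.re)) := by
          rw [Finset.sum_add_distrib, ← Finset.mul_sum, ← Finset.mul_sum]
      _ = 2 * (r : ℝ) * (d : ℝ) + 4 * (r : ℝ) := by
          congr 1
          · congr 1
            have : ∑ k, (B k).trace.re = ((∑ k, B k).trace).re := by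
              rw [Matrix.trace_sum, Complex.re_sum]
            rw [this, hsum, Matrix.trace_one]
            simp
          · congr 1
            have : ∑ k, ((A * B k).trace).re = ((A * ∑ k, B k).trace).re := by
              rw [Finset.mul_sum, Matrix.trace_sum, Complex.re_sum]
            rw [this, hsum, mul_one, htAre]
      _ = 2 * ((d : ℝ) + 2) * A.trace.re := by
          rw [htAre]; ring
end
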